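/- arXiv:1506.07379 — 5 statements merged into one kernel-verified Lean document; each statement's English description precedes it below -/
import Mathlib

section
/- Let f(x) = a_0 x^n + ... + a_n be a real polynomial of degree n with a_0 > 0, let 2 ≤ M ≤ n, and suppose that none of the polynomials f_0, f_1, ..., f_n produced by the generalized Euclidean algorithm with step M is the zero polynomial (so all divisions in the algorithm occur with nonzero divisors). Then for every k = 1, ..., M−1 and every r = 1, ..., ⌈n/(M−1)⌉, the minor H_M(k,r) of the generalized Hurwitz matrix H_M(f) equals the product h_{M−k} · h_{2M−k−1} · h_{3M−k−2} ⋯ h_{rM−k−(r−1)}, where h_i denotes the leading coefficient of f_i and h_i := 0 for i > n. -/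
open Polynomial

/-- The arithmetic part `f_j` of the polynomial with coefficients `a_0,...,a_n`:
`f_j(x) = Σ_{0 ≤ l ≤ n, l ≡ j (mod M)} a_l x^(n-l)`. -/
noncomputable def geaInit (a : ℕ → ℝ) (n M j : ℕ) : Polynomial ℝ :=
  ∑ l ∈ Finset.range (n + 1), if l % M = j then C (a l) * X ^ (n - l) else 0

/-- The polynomials `f_0, f_1, ..., f_n` of the generalized Euclidean algorithm with step `M`:
`f_i = d_i f_{i+1} + f_{i+M}` where `d_i = f_i / f_{i+1}` and `f_{i+M} = f_i % f_{i+1}`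
(Euclidean division of polynomials). -/
noncomputable def gea (a : ℕ → ℝ) (n M : ℕ) : ℕ → Polynomial ℝ
  | i =>
    if _h : i < M then geaInit a n M i
    else if _h2 : 2 ≤ M then
      gea a n M (i - M) % gea a n M (i - M + 1)
    else 0
  termination_by i => i
  decreasing_by all_goals omega

/-- Entry `(i,j)` (0-based) of the generalized Hurwitz matrix `H_M(f) = (a_{Mj-i})_{i,j≥1}`,
with `a_k := 0` for `k < 0` and `k > n`. -/
def hEntry (a : ℕ → ℝ) (n M : ℕ) (i j : ℕ) : ℝ :=
  if i + 1 ≤ M * (j + 1) ∧ M * (j + 1) - (i + 1) ≤ n then a (M * (j + 1) - (i + 1)) else 0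

/-- The special minor `H_M(k,r)` on rows `k, k+1, ..., k+r-1` and columns `1, ..., r`
(1-based indexing). -/
noncomputable def specialMinor (a : ℕ → ℝ) (n M k r : ℕ) : ℝ :=
  Matrix.det (Matrix.of fun s t : Fin r => hEntry a n M (k - 1 + s) t)
namespace SMaux
open Polynomial

lemma gea_lt (a : ℕ → ℝ) (n M i : ℕ) (h : i < M) : gea a n M i = geaInit a n M i := by
  rw [gea]; simp [h]

lemma gea_ge (a : ℕ → ℝ) (n M i : ℕ) (h : M ≤ i) (hM : 2 ≤ M) :
    gea a n M i = gea a n M (i - M) % gea a n M (i - M + 1) := by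
  rw [gea]; rw [dif_neg (by omega), dif_pos hM]

lemma coeff_geaInit (a : ℕ → ℝ) (n M i m : ℕ) :
    (geaInit a n M i).coeff m =
      if m ≤ n ∧ (n - m) % M = i then a (n - m) else 0 := by
  classical
  rw [geaInit, finset_sum_coeff]
  by_cases hm : m ≤ n
  · rw [Finset.sum_eq_single (n - m)]
    · have h1 : n - (n - m) = m := by omega
      by_cases h : (n - m) % M = i
      · simp [h, hm, h1, coeff_C_mul, coeff_X_pow]
      · simp [h, hm]
    · intro l hl hlm
      have : m ≠ n - l := by simp at hl; omega
      by_cases h : l % M = i <;> simp [h, coeff_C_mul, coeff_X_pow, this]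
    · intro h; exact absurd (by simp) h
  · rw [Finset.sum_eq_zero, if_neg (by omega)]
    intro l hl
    simp at hl
    have : m ≠ n - l := by omega
    by_cases h : l % M = i <;> simp [h, coeff_C_mul, coeff_X_pow, this]



def Supp (M : ℕ) (γ : ZMod M) (p : Polynomial ℝ) : Prop :=
  ∀ m ∈ p.support, (m : ZMod M) = γ

lemma supp_zero (M : ℕ) (γ : ZMod M) : Supp M γ 0 := by
  intro m hm; simp at hm

lemma supp_coeff_eq_zero {M : ℕ} {γ : ZMod M} {p : Polynomial ℝ} (h : Supp M γ p)
    {m : ℕ} (hm : (m : ZMod M) ≠ γ) : p.coeff m = 0 := by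
  by_contra hc
  exact hm (h m (Polynomial.mem_support_iff.mpr hc))

lemma supp_geaInit (a : ℕ → ℝ) (n M i : ℕ) :
    Supp M ((n : ZMod M) - (i : ZMod M)) (geaInit a n M i) := by
  intro m hm
  rw [Polynomial.mem_support_iff, coeff_geaInit] at hm
  by_cases h : m ≤ n ∧ (n - m) % M = i
  · obtain ⟨h1, h2⟩ := h
    have hnm : (n : ZMod M) - (m : ZMod M) = (i : ZMod M) := by
      rw [← Nat.cast_sub h1, ← h2, ZMod.natCast_mod]
    rw [← hnm]; ring
  · simp [h] at hm

lemma supp_mul {M : ℕ} {γ δ : ZMod M} {p q : Polynomial ℝ}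
    (hp : Supp M γ p) (hq : Supp M δ q) : Supp M (γ + δ) (p * q) := by
  intro m hm
  rw [Polynomial.mem_support_iff, Polynomial.coeff_mul] at hm
  obtain ⟨x, hx, hne⟩ := Finset.exists_ne_zero_of_sum_ne_zero hm
  rw [Finset.HasAntidiagonal.mem_antidiagonal] at hx
  have h1 : (x.1 : ZMod M) = γ := hp _ (Polynomial.mem_support_iff.mpr (fun h => hne (by simp [h])))
  have h2 : (x.2 : ZMod M) = δ := hq _ (Polynomial.mem_support_iff.mpr (fun h => hne (by simp [h])))
  rw [← hx, Nat.cast_add, h1, h2]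

noncomputable def classPart (M : ℕ) (γ : ZMod M) (p : Polynomial ℝ) : Polynomial ℝ :=
  ∑ m ∈ p.support, if (m : ZMod M) = γ then Polynomial.C (p.coeff m) * Polynomial.X ^ m else 0

lemma coeff_classPart (M : ℕ) (γ : ZMod M) (p : Polynomial ℝ) (m : ℕ) :
    (classPart M γ p).coeff m = if (m : ZMod M) = γ then p.coeff m else 0 := by
  classical
  rw [classPart, Polynomial.finset_sum_coeff]
  by_cases hγ : (m : ZMod M) = γ
  · rw [if_pos hγ]
    by_cases hm : m ∈ p.support
    · rw [Finset.sum_eq_single m]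
      · simp [hγ, Polynomial.coeff_C_mul, Polynomial.coeff_X_pow]
      · intro l hl hlm
        by_cases h : ((l : ZMod M) = γ) <;>
          simp [h, Polynomial.coeff_C_mul, Polynomial.coeff_X_pow, (Ne.symm hlm : m ≠ l)]
      · intro h; exact absurd hm h
    · rw [Finset.sum_eq_zero, Polynomial.notMem_support_iff.mp hm]
      intro l hl
      have hlm : m ≠ l := fun h => hm (h ▸ hl)
      by_cases h : ((l : ZMod M) = γ) <;>
        simp [h, Polynomial.coeff_C_mul, Polynomial.coeff_X_pow, hlm]
  · rw [if_neg hγ, Finset.sum_eq_zero]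
    intro l hl
    by_cases h : ((l : ZMod M) = γ)
    · have hlm : m ≠ l := fun e => hγ (e ▸ h)
      simp [h, Polynomial.coeff_C_mul, Polynomial.coeff_X_pow, hlm]
    · simp [h]

lemma supp_classPart (M : ℕ) (γ : ZMod M) (p : Polynomial ℝ) : Supp M γ (classPart M γ p) := by
  intro m hm
  rw [Polynomial.mem_support_iff, coeff_classPart] at hm
  by_cases h : (m : ZMod M) = γ
  · exact h
  · simp [h] at hm

lemma classPart_eq_self {M : ℕ} {γ : ZMod M} {p : Polynomial ℝ} (h : Supp M γ p) :
    classPart M γ p = p := by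
  ext m
  rw [coeff_classPart]
  by_cases hm : (m : ZMod M) = γ
  · simp [hm]
  · rw [if_neg hm, supp_coeff_eq_zero h hm]

lemma classPart_add (M : ℕ) (γ : ZMod M) (p q : Polynomial ℝ) :
    classPart M γ (p + q) = classPart M γ p + classPart M γ q := by
  ext m
  simp only [Polynomial.coeff_add, coeff_classPart]
  by_cases h : (m : ZMod M) = γ <;> simp [h]

lemma degree_classPart_le (M : ℕ) (γ : ZMod M) (p : Polynomial ℝ) :
    (classPart M γ p).degree ≤ p.degree := by
  apply Polynomial.degree_mono
  intro m hm
  rw [Polynomial.mem_support_iff, coeff_classPart] at hm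
  rw [Polynomial.mem_support_iff]
  by_cases h : (m : ZMod M) = γ
  · simpa [h] using hm
  · simp [h] at hm


open Polynomial in
lemma classPart_mul {M : ℕ} {β : ZMod M} {q : Polynomial ℝ} (hq : Supp M β q)
    (γ : ZMod M) (c : Polynomial ℝ) :
    classPart M γ (q * c) = q * classPart M (γ - β) c := by
  ext m
  rw [coeff_classPart, Polynomial.coeff_mul, Polynomial.coeff_mul]
  by_cases hγ : (m : ZMod M) = γ
  · rw [if_pos hγ]
    apply Finset.sum_congr rfl
    intro x hx
    rw [Finset.HasAntidiagonal.mem_antidiagonal] at hx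
    rw [coeff_classPart]
    by_cases h2 : ((x.2 : ZMod M) = γ - β)
    · rw [if_pos h2]
    · rw [if_neg h2, mul_zero]
      by_cases h1 : q.coeff x.1 = 0
      · rw [h1, zero_mul]
      · exfalso
        apply h2
        have := hq _ (Polynomial.mem_support_iff.mpr h1)
        have hm : ((x.1 : ZMod M) + (x.2 : ZMod M) = γ) := by
          rw [← Nat.cast_add, hx, hγ]
        rw [this] at hm
        rw [← hm]; ring
  · rw [if_neg hγ]
    symm
    apply Finset.sum_eq_zero
    intro x hx
    rw [Finset.HasAntidiagonal.mem_antidiagonal] at hx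
    rw [coeff_classPart]
    by_cases h2 : ((x.2 : ZMod M) = γ - β)
    · rw [if_pos h2]
      by_cases h1 : q.coeff x.1 = 0
      · rw [h1, zero_mul]
      · exfalso
        apply hγ
        have h1' := hq _ (Polynomial.mem_support_iff.mpr h1)
        rw [← hx, Nat.cast_add, h1', h2]; ring
    · rw [if_neg h2, mul_zero]

lemma degree_mod_lt {q : Polynomial ℝ} (p : Polynomial ℝ) (hq : q ≠ 0) :
    (p % q).degree < q.degree :=
  EuclideanDomain.mod_lt p hq

lemma mod_unique {p q r : Polynomial ℝ} (hq : q ≠ 0) (hdeg : r.degree < q.degree)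
    (hdvd : q ∣ (p - r)) : p % q = r := by
  have h1 : q ∣ (p % q - r) := by
    have h2 : q ∣ (p - p % q) := by
      have := EuclideanDomain.div_add_mod p q
      exact ⟨p / q, by linear_combination -this⟩
    have : p % q - r = (p - r) - (p - p % q) := by ring
    rw [this]
    exact dvd_sub hdvd h2
  have h3 : (p % q - r).degree < q.degree :=
    lt_of_le_of_lt (Polynomial.degree_sub_le _ _) (max_lt (degree_mod_lt p hq) hdeg)
  have := Polynomial.eq_zero_of_dvd_of_degree_lt h1 h3
  have : p % q - r = 0 := this
  linear_combination this

lemma supp_mod {M : ℕ} {α β : ZMod M} {p q : Polynomial ℝ}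
    (hp : Supp M α p) (hq : Supp M β q) : Supp M α (p % q) := by
  by_cases hq0 : q = 0
  · rw [hq0, EuclideanDomain.mod_zero]; exact hp
  · have hdm := EuclideanDomain.div_add_mod p q
    have key : p = q * classPart M (α - β) (p / q) + classPart M α (p % q) := by
      conv_lhs => rw [← classPart_eq_self hp, ← hdm]
      rw [classPart_add, classPart_mul hq]
    have heq : p % q - classPart M α (p % q) = q * (classPart M (α - β) (p / q) - p / q) := by
      have : q * (p / q) + p % q = p := hdm
      linear_combination this + key
    by_cases hz : classPart M (α - β) (p / q) - p / q = 0
    · have : p % q = classPart M α (p % q) := by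
        rw [hz, mul_zero] at heq
        linear_combination heq
      rw [this]; exact supp_classPart M α _
    · exfalso
      have h1 : (q * (classPart M (α - β) (p / q) - p / q)).degree ≥ q.degree := by
        rw [Polynomial.degree_mul]
        have := Polynomial.zero_le_degree_iff.mpr hz
        exact le_add_of_nonneg_right this
    -- degree LHS < degree q
      have h2 : (p % q - classPart M α (p % q)).degree < q.degree := by
        refine lt_of_le_of_lt (Polynomial.degree_sub_le _ _) (max_lt (degree_mod_lt p hq0) ?_)
        exact lt_of_le_of_lt (degree_classPart_le M α _) (degree_mod_lt p hq0)
      rw [heq] at h2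
      exact absurd h2 (not_lt_of_ge h1)

lemma supp_gea (a : ℕ → ℝ) (n M : ℕ) (hM : 2 ≤ M) (i : ℕ) :
    Supp M ((n : ZMod M) - (i : ZMod M)) (gea a n M i) := by
  induction i using Nat.strong_induction_on with
  | _ i ih =>
    by_cases h : i < M
    · rw [gea_lt a n M i h]; exact supp_geaInit a n M i
    · rw [gea_ge a n M i (by omega) hM]
      have h1 := ih (i - M) (by omega)
      have h2 := ih (i - M + 1) (by omega)
      have hc : ((i - M : ℕ) : ZMod M) = (i : ZMod M) := by
        rw [Nat.cast_sub (by omega)]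
        simp
      rw [hc] at h1
      exact supp_mod h1 h2
lemma natDegree_mod_class {p : Polynomial ℝ} {M e : ℕ} (hp : p ≠ 0)
    (h : Supp M ((e : ZMod M)) p) : p.natDegree % M = e % M := by
  have := h p.natDegree (Polynomial.natDegree_mem_support_of_nonzero hp)
  rwa [ZMod.natCast_eq_natCast_iff'] at this

lemma supp_gea_nat (a : ℕ → ℝ) (n M : ℕ) (hM : 2 ≤ M) {i : ℕ} (hi : i ≤ n) :
    Supp M (((n - i : ℕ) : ZMod M)) (gea a n M i) := by
  have := supp_gea a n M hM i
  rwa [show ((n - i : ℕ) : ZMod M) = (n : ZMod M) - (i : ZMod M) from Nat.cast_sub hi]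

lemma supp_gea_nat' (a : ℕ → ℝ) (n M : ℕ) (hM : 2 ≤ M) {i : ℕ} (hi : i ≤ n + M) :
    Supp M (((n + M - i : ℕ) : ZMod M)) (gea a n M i) := by
  have := supp_gea a n M hM i
  have hc : ((n + M - i : ℕ) : ZMod M) = (n : ZMod M) - (i : ZMod M) := by
    rw [Nat.cast_sub hi, Nat.cast_add, ZMod.natCast_self]
    ring
  rwa [hc]

lemma degree_geaInit_le (a : ℕ → ℝ) (n M i : ℕ) (hi : i < M) :
    (geaInit a n M i).degree ≤ ((n - i : ℕ) : WithBot ℕ) := by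
  rw [Polynomial.degree_le_iff_coeff_zero]
  intro m hm
  rw [Nat.cast_lt] at hm
  rw [coeff_geaInit]
  by_cases h : m ≤ n ∧ (n - m) % M = i
  · exfalso
    have : i ≤ n - m := h.2 ▸ Nat.mod_le _ _
    omega
  · simp [h]

lemma chainA (a : ℕ → ℝ) (n M : ℕ) (hM : 2 ≤ M)
    (hnz : ∀ i ≤ n, gea a n M i ≠ 0) :
    ∀ d j, 1 ≤ j → j ≤ n → n - j ≤ d →
      (gea a n M j).degree < ((n - j : ℕ) : WithBot ℕ) → False := by
  intro d
  induction d with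
  | zero =>
    intro j h1 h2 h3 h4
    have hne := hnz j h2
    have : (gea a n M j).degree = ((gea a n M j).natDegree : WithBot ℕ) :=
      Polynomial.degree_eq_natDegree hne
    rw [this, Nat.cast_lt] at h4
    omega
  | succ d ih =>
    intro j h1 h2 _ h4
    have hne := hnz j h2
    set D := (gea a n M j).natDegree with hD
    have hdeg : (gea a n M j).degree = (D : WithBot ℕ) := Polynomial.degree_eq_natDegree hne
    rw [hdeg, Nat.cast_lt] at h4
    have hmod : D % M = (n - j) % M := natDegree_mod_class hne (supp_gea_nat a n M hM h2)
    -- D + M ≤ n - j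
    have hds : D ≡ (n - j) [MOD M] := hmod
    have hdvd : M ∣ (n - j) - D := (Nat.modEq_iff_dvd' (le_of_lt h4)).mp hds
    obtain ⟨c, hc⟩ := hdvd
    have hcpos : 1 ≤ c := by
      rcases Nat.eq_zero_or_pos c with h | h
      · subst h; simp at hc; omega
      · exact h
    have hMc : M ≤ M * c := Nat.le_mul_of_pos_right M hcpos
    have hDM : D + M ≤ n - j := by omega
    by_cases hcase : j + M - 1 ≤ n
    · set j' := j + M - 1 with hj'
      have hge : gea a n M j' = gea a n M (j' - M) % gea a n M (j' - M + 1) :=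
        gea_ge a n M j' (by omega) hM
      rw [show j' - M = j - 1 by omega, show j - 1 + 1 = j by omega] at hge
      have hlt : (gea a n M j').degree < (gea a n M j).degree := by
        rw [hge]; exact degree_mod_lt _ hne
      rw [hdeg] at hlt
      apply ih j' (by omega) hcase (by omega)
      refine lt_trans hlt ?_
      rw [Nat.cast_lt]
      omega
    · omega

lemma deg_gea (a : ℕ → ℝ) (n M : ℕ) (hM : 2 ≤ M) (hMn : M ≤ n) (ha0 : a 0 ≠ 0)
    (hnz : ∀ i ≤ n, gea a n M i ≠ 0) :
    ∀ i ≤ n, (gea a n M i).degree = ((n - i : ℕ) : WithBot ℕ) := by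
  intro i
  induction i using Nat.strong_induction_on with
  | _ i ih =>
    intro hi
    have hne := hnz i hi
    set D := (gea a n M i).natDegree with hD
    have hdeg : (gea a n M i).degree = (D : WithBot ℕ) := Polynomial.degree_eq_natDegree hne
    have hmod : D % M = (n - i) % M := natDegree_mod_class hne (supp_gea_nat a n M hM hi)
    -- upper bound D ≤ n - i
    have hub : D ≤ n - i := by
      by_cases hiM : i < M
      · have := degree_geaInit_le a n M i hiM
        rw [← gea_lt a n M i hiM, hdeg, Nat.cast_le] at this
        exact this
      · have hge := gea_ge a n M i (by omega) hM
        have hw : i - M + 1 ≤ n := by omega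
        have hlt : (gea a n M i).degree < (gea a n M (i - M + 1)).degree := by
          rw [hge]; exact degree_mod_lt _ (hnz _ hw)
        rw [ih (i - M + 1) (by omega) hw, hdeg, Nat.cast_lt] at hlt
        have hub' : D ≤ n - i + M - 2 := by omega
        by_contra hgt
        push_neg at hgt
        have hds : (n - i) ≡ D [MOD M] := hmod.symm
        have hdvd : M ∣ D - (n - i) := (Nat.modEq_iff_dvd' (le_of_lt hgt)).mp hds
        obtain ⟨c, hc⟩ := hdvd
        have hcpos : 1 ≤ c := by
          rcases Nat.eq_zero_or_pos c with h | h
          · subst h; simp at hc; omega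
          · exact h
        have hMc : M ≤ M * c := Nat.le_mul_of_pos_right M hcpos
        omega
    rcases Nat.eq_zero_or_pos i with hi0 | hi1
    · subst hi0
      have hcoeff : (gea a n M 0).coeff n = a 0 := by
        rw [gea_lt a n M 0 (by omega), coeff_geaInit]
        simp
      have hle : (n : WithBot ℕ) ≤ (gea a n M 0).degree :=
        Polynomial.le_degree_of_ne_zero (by rw [hcoeff]; exact ha0)
      rw [hdeg] at hle ⊢
      rw [Nat.cast_le] at hle
      simp only [Nat.sub_zero]
      rw [Nat.cast_inj]
      omega
    · rw [hdeg, Nat.cast_inj]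
      by_contra hne2
      exact chainA a n M hM hnz (n - i) i hi1 hi (le_refl _)
        (by rw [hdeg, Nat.cast_lt]; omega)

lemma gea_zero_of_gt (a : ℕ → ℝ) (n M : ℕ) (hM : 2 ≤ M) (hMn : M ≤ n) (ha0 : a 0 ≠ 0)
    (hnz : ∀ i ≤ n, gea a n M i ≠ 0) :
    ∀ e, n < e → e ≤ n + M - 2 → gea a n M e = 0 := by
  intro e he1 he2
  by_contra hne
  set D := (gea a n M e).natDegree with hD
  have hdeg : (gea a n M e).degree = (D : WithBot ℕ) := Polynomial.degree_eq_natDegree hne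
  have hge := gea_ge a n M e (by omega) hM
  have hw1 : 1 ≤ e - M + 1 := by omega
  have hw2 : e - M + 1 ≤ n := by omega
  have hlt : (gea a n M e).degree < (gea a n M (e - M + 1)).degree := by
    rw [hge]; exact degree_mod_lt _ (hnz _ hw2)
  rw [deg_gea a n M hM hMn ha0 hnz _ hw2, hdeg, Nat.cast_lt] at hlt
  -- hlt : D < n - (e - M + 1) = n + M - e - 1
  have hmod : D % M = (n + M - e) % M :=
    natDegree_mod_class hne (supp_gea_nat' a n M hM (by omega))
  have hsm : (n + M - e) % M = n + M - e := Nat.mod_eq_of_lt (by omega)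
  have : D % M ≤ D := Nat.mod_le _ _
  omega
lemma gea_rec (a : ℕ → ℝ) (n M : ℕ) (hM : 2 ≤ M) (hMn : M ≤ n) (ha0 : a 0 ≠ 0)
    (hnz : ∀ i ≤ n, gea a n M i ≠ 0) (c : ℕ) (hc : c + 2 ≤ n) :
    gea a n M (c + M) = gea a n M c -
      Polynomial.C ((gea a n M c).leadingCoeff / (gea a n M (c + 1)).leadingCoeff) *
        (Polynomial.X * gea a n M (c + 1)) := by
  have hgeq0 : gea a n M (c + M) = gea a n M c % gea a n M (c + 1) := by
    rw [gea_ge a n M (c + M) (by omega) hM]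
    rw [show c + M - M = c by omega]
  set p := gea a n M c with hp
  set q := gea a n M (c + 1) with hq
  set γ := p.leadingCoeff / q.leadingCoeff with hγ
  have hpne : p ≠ 0 := hnz c (by omega)
  have hqne : q ≠ 0 := hnz (c + 1) (by omega)
  have hpd : p.degree = ((n - c : ℕ) : WithBot ℕ) := deg_gea a n M hM hMn ha0 hnz c (by omega)
  have hqd : q.degree = ((n - (c + 1) : ℕ) : WithBot ℕ) :=
    deg_gea a n M hM hMn ha0 hnz (c + 1) (by omega)
  have hpnd : p.natDegree = n - c := Polynomial.natDegree_eq_of_degree_eq_some hpd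
  have hqnd : q.natDegree = n - (c + 1) := Polynomial.natDegree_eq_of_degree_eq_some hqd
  rw [hgeq0]
  apply mod_unique hqne
  · -- degree bound
    rw [hqd, Polynomial.degree_lt_iff_coeff_zero]
    intro m hm
    rw [Polynomial.coeff_sub, Polynomial.coeff_C_mul]
    have hm1 : 1 ≤ m := by omega
    have hXq : (Polynomial.X * q).coeff m = q.coeff (m - 1) := by
      nth_rewrite 1 [show m = (m - 1) + 1 by omega]
      rw [Polynomial.coeff_X_mul]
    rw [hXq]
    rcases lt_trichotomy m (n - c) with h | h | h
    · -- m = n - c - 1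
      have hm2 : m = n - c - 1 := by omega
      have hpc : p.coeff m = 0 := by
        apply supp_coeff_eq_zero (supp_gea_nat a n M hM (show c ≤ n by omega))
        rw [Ne, ZMod.natCast_eq_natCast_iff']
        intro hcon
        have : m ≡ (n - c) [MOD M] := hcon
        have := (Nat.modEq_iff_dvd' (by omega)).mp this
        obtain ⟨d, hd⟩ := this
        rcases Nat.eq_zero_or_pos d with h0 | h0
        · subst h0; simp at hd; omega
        · have : M ≤ M * d := Nat.le_mul_of_pos_right M h0
          omega
      have hqc : q.coeff (m - 1) = 0 := by
        apply supp_coeff_eq_zero (supp_gea_nat a n M hM (show c + 1 ≤ n by omega))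
        rw [Ne, ZMod.natCast_eq_natCast_iff']
        intro hcon
        have : (m - 1) ≡ (n - (c + 1)) [MOD M] := hcon
        have := (Nat.modEq_iff_dvd' (by omega)).mp this
        obtain ⟨d, hd⟩ := this
        rcases Nat.eq_zero_or_pos d with h0 | h0
        · subst h0; simp at hd; omega
        · have : M ≤ M * d := Nat.le_mul_of_pos_right M h0
          omega
      rw [hpc, hqc, mul_zero, sub_zero]
    · -- m = n - c : leading terms cancel
      have hpc : p.coeff m = p.leadingCoeff := by
        rw [h, ← hpnd, Polynomial.coeff_natDegree]
      have hqc : q.coeff (m - 1) = q.leadingCoeff := by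
        rw [show m - 1 = n - (c + 1) by omega, ← hqnd, Polynomial.coeff_natDegree]
      rw [hpc, hqc, hγ, div_mul_cancel₀ _ (Polynomial.leadingCoeff_ne_zero.mpr hqne), sub_self]
    · -- m > n - c
      have hpc : p.coeff m = 0 := by
        apply Polynomial.coeff_eq_zero_of_natDegree_lt; omega
      have hqc : q.coeff (m - 1) = 0 := by
        apply Polynomial.coeff_eq_zero_of_natDegree_lt; omega
      rw [hpc, hqc, mul_zero, sub_zero]
  · exact ⟨Polynomial.C γ * Polynomial.X, by ring⟩

def placeRow (n M : ℕ) (p : Polynomial ℝ) (i j : ℕ) : ℝ :=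
  if M * (j + 1) ≤ n + i then p.coeff (n + i - M * (j + 1)) else 0

lemma hEntry_eq_placeRow (a : ℕ → ℝ) (n M : ℕ) (hM : 2 ≤ M) (i j ν : ℕ)
    (hi : 1 ≤ i) (hν : ν < M) (hmod : (i + ν) % M = 0) :
    hEntry a n M (i - 1) j = placeRow n M (gea a n M ν) i j := by
  rw [gea_lt a n M ν hν]
  unfold hEntry placeRow
  have hii : i - 1 + 1 = i := by omega
  rw [hii]
  by_cases h1 : M * (j + 1) ≤ n + i
  · rw [if_pos h1, coeff_geaInit]
    by_cases h2 : i ≤ M * (j + 1)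
    · set l := M * (j + 1) - i with hl
      have hm : n + i - M * (j + 1) = n - l := by omega
      have hlM : l % M = ν := by
        have hd1 : (l + i) % M = 0 := by
          rw [show l + i = M * (j + 1) by omega, Nat.mul_mod_right]
        have heq : (l + i) % M = (ν + i) % M := by rw [hd1, Nat.add_comm ν i, ← hmod]
        have : l ≡ ν [MOD M] := Nat.ModEq.add_right_cancel' i heq
        rw [Nat.ModEq] at this
        rw [this, Nat.mod_eq_of_lt hν]
      have hln : l ≤ n := by omega
      rw [if_pos ⟨h2, by omega⟩, hm]
      have : n - (n - l) = l := by omega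
      rw [if_pos ⟨by omega, by rw [this]; exact hlM⟩, this]
    · rw [if_neg (by omega)]
      rw [if_neg (by omega)]
  · rw [if_neg h1, if_neg (by omega)]

lemma placeRow_sub (n M : ℕ) (p q : Polynomial ℝ) (γ : ℝ) (i j : ℕ) (hi : 1 ≤ i) :
    placeRow n M (p - Polynomial.C γ * (Polynomial.X * q)) i j
      = placeRow n M p i j - γ * placeRow n M q (i - 1) j := by
  unfold placeRow
  by_cases h1 : M * (j + 1) ≤ n + (i - 1)
  · have h2 : M * (j + 1) ≤ n + i := by omega
    rw [if_pos h1, if_pos h2, Polynomial.coeff_sub, Polynomial.coeff_C_mul]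
    have hm1 : 1 ≤ n + i - M * (j + 1) := by omega
    rw [show n + i - M * (j + 1) = (n + (i - 1) - M * (j + 1)) + 1 by omega,
      Polynomial.coeff_X_mul, if_pos h2]
  · rw [if_neg h1]
    by_cases h2 : M * (j + 1) ≤ n + i
    · rw [if_pos h2]
      have hm0 : n + i - M * (j + 1) = 0 := by omega
      rw [hm0, Polynomial.coeff_sub]
      simp only [Polynomial.mul_coeff_zero, Polynomial.coeff_X_zero, zero_mul, mul_zero, sub_zero]
      rw [if_pos h2]
    · rw [if_neg h2, if_neg h2]
      simp
def eIdx (M k t : ℕ) : ℕ := M - k + t * (M - 1)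

def sIdx (M k : ℕ) : ℕ → ℕ
  | 0 => 0
  | t + 1 => sIdx M k t + (if eIdx M k (t + 1) % M = M - 1 then 1 else 0)

lemma sIdx_succ (M k t : ℕ) :
    sIdx M k (t + 1) = sIdx M k t + (if eIdx M k (t + 1) % M = M - 1 then 1 else 0) := rfl

def phi (M k t σ : ℕ) : ℕ :=
  eIdx M k t % M + M * min (eIdx M k t / M) (σ - sIdx M k t)

lemma eIdx_spec (M k t : ℕ) (hM : 2 ≤ M) (hk1 : 1 ≤ k) (hkM : k ≤ M - 1) :
    eIdx M k t + k + t = M * (t + 1) := by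
  have h1 : M - 1 + 1 = M := by omega
  have h2 : t * (M - 1) + t = t * M := by
    conv_rhs => rw [← h1]
    ring
  unfold eIdx
  calc M - k + t * (M - 1) + k + t = (M - k + k) + (t * (M - 1) + t) := by ring
    _ = M + t * M := by rw [h2, show M - k + k = M by omega]
    _ = M * (t + 1) := by ring

lemma eIdx_succ (M k t : ℕ) : eIdx M k (t + 1) = eIdx M k t + (M - 1) := by
  unfold eIdx; ring

lemma eIdx_pos (M k t : ℕ) (hM : 2 ≤ M) (hkM : k ≤ M - 1) : 1 ≤ eIdx M k t := by
  unfold eIdx; omega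

lemma eIdx_mono (M k : ℕ) {t t' : ℕ} (h : t ≤ t') : eIdx M k t ≤ eIdx M k t' := by
  unfold eIdx
  exact Nat.add_le_add_left (Nat.mul_le_mul_right _ h) _

lemma sIdx_mono (M k : ℕ) {t t' : ℕ} (h : t ≤ t') : sIdx M k t ≤ sIdx M k t' := by
  induction t' with
  | zero => simp at h; subst h; exact le_refl _
  | succ t'' ih =>
    rcases Nat.lt_or_ge t (t'' + 1) with h2 | h2
    · have := ih (by omega)
      rw [sIdx_succ]
      omega
    · have : t = t'' + 1 := by omega
      subst this
      exact le_refl _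

-- mod/div relations between consecutive eIdx
lemma eIdx_md_A (M k t : ℕ) (hM : 2 ≤ M) (hkM : k ≤ M - 1)
    (h : eIdx M k (t + 1) % M < M - 1) :
    eIdx M k t % M = eIdx M k (t + 1) % M + 1 ∧
      eIdx M k t / M + 1 = eIdx M k (t + 1) / M := by
  have hs := eIdx_succ M k t
  have hd := Nat.div_add_mod (eIdx M k (t + 1)) M
  set q := eIdx M k (t + 1) / M with hq
  set ρ := eIdx M k (t + 1) % M with hρ
  have hρM : ρ < M := Nat.mod_lt _ (by omega)
  have het : 1 ≤ eIdx M k t := eIdx_pos M k t hM hkM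
  have hq1 : 1 ≤ q := by
    rcases Nat.eq_zero_or_pos q with h0 | h0
    · exfalso; rw [h0, Nat.mul_zero] at hd; omega
    · exact h0
  have hqq : M * (q - 1) + M = M * q := by
    conv_rhs => rw [show q = (q - 1) + 1 by omega]
    ring
  have het2 : eIdx M k t = (ρ + 1) + M * (q - 1) := by omega
  constructor
  · rw [het2, Nat.add_mul_mod_self_left, Nat.mod_eq_of_lt (by omega)]
  · rw [het2, Nat.add_mul_div_left _ _ (show 0 < M by omega),
      Nat.div_eq_of_lt (by omega)]
    omega

lemma eIdx_md_B (M k t : ℕ) (hM : 2 ≤ M) (hkM : k ≤ M - 1)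
    (h : eIdx M k (t + 1) % M = M - 1) :
    eIdx M k t % M = 0 ∧ eIdx M k t / M = eIdx M k (t + 1) / M := by
  have hs := eIdx_succ M k t
  have hd := Nat.div_add_mod (eIdx M k (t + 1)) M
  set q := eIdx M k (t + 1) / M with hq
  have het2 : eIdx M k t = M * q := by omega
  constructor
  · rw [het2, Nat.mul_mod_right]
  · rw [het2, Nat.mul_div_cancel_left _ (show 0 < M by omega)]

lemma phi_zero (M k t : ℕ) : phi M k t 0 = eIdx M k t % M := by
  unfold phi
  rw [Nat.zero_sub, Nat.min_zero, Nat.mul_zero, Nat.add_zero]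

lemma phi_le (M k t σ : ℕ) : phi M k t σ ≤ eIdx M k t := by
  unfold phi
  have h1 : min (eIdx M k t / M) (σ - sIdx M k t) ≤ eIdx M k t / M := Nat.min_le_left _ _
  have h2 := Nat.mod_add_div (eIdx M k t) M
  have h3 : M * min (eIdx M k t / M) (σ - sIdx M k t) ≤ M * (eIdx M k t / M) :=
    Nat.mul_le_mul_left _ h1
  omega

lemma phi_final (M k t σ : ℕ) (h : sIdx M k t + eIdx M k t / M ≤ σ) :
    phi M k t σ = eIdx M k t := by
  unfold phi
  rw [min_eq_left (by omega)]
  exact Nat.mod_add_div _ _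

lemma phi_step_noop (M k t σ : ℕ)
    (h : ¬ (sIdx M k t ≤ σ ∧ σ - sIdx M k t < eIdx M k t / M)) :
    phi M k t (σ + 1) = phi M k t σ := by
  unfold phi
  congr 2
  omega

lemma phi_step_up (M k t σ : ℕ)
    (h1 : sIdx M k t ≤ σ) (h2 : σ - sIdx M k t < eIdx M k t / M) :
    phi M k t (σ + 1) = phi M k t σ + M := by
  unfold phi
  rw [min_eq_right (by omega), min_eq_right (by omega),
    show σ + 1 - sIdx M k t = (σ - sIdx M k t) + 1 by omega]
  ring

lemma phi_align (M k t σ : ℕ) (hM : 2 ≤ M) (hkM : k ≤ M - 1)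
    (h1 : sIdx M k (t + 1) ≤ σ) (h2 : σ - sIdx M k (t + 1) < eIdx M k (t + 1) / M) :
    phi M k t σ = phi M k (t + 1) σ + 1 := by
  by_cases hB : eIdx M k (t + 1) % M = M - 1
  · obtain ⟨hm, hdv⟩ := eIdx_md_B M k t hM hkM hB
    have hss : sIdx M k (t + 1) = sIdx M k t + 1 := by
      rw [sIdx_succ, if_pos hB]
    unfold phi
    rw [hm, hdv, hB, hss]
    rw [min_eq_right (by omega), min_eq_right (by omega)]
    have e1 : σ - sIdx M k t = (σ - (sIdx M k t + 1)) + 1 := by omega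
    rw [e1, Nat.mul_add, Nat.mul_one]
    omega
  · have hρ : eIdx M k (t + 1) % M < M - 1 := by
      have := Nat.mod_lt (eIdx M k (t + 1)) (show 0 < M by omega)
      omega
    obtain ⟨hm, hdv⟩ := eIdx_md_A M k t hM hkM hρ
    have hss : sIdx M k (t + 1) = sIdx M k t := by
      rw [sIdx_succ, if_neg hB, Nat.add_zero]
    unfold phi
    rw [hm, ← hdv, hss]
    rw [min_eq_right (by omega), min_eq_right (by omega)]
    ring
lemma main_lemma (a : ℕ → ℝ) (n M : ℕ) (hM : 2 ≤ M) (hMn : M ≤ n) (ha0 : a 0 ≠ 0)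
    (hnz : ∀ i ≤ n, gea a n M i ≠ 0) (k r : ℕ) (hk1 : 1 ≤ k) (hkM : k ≤ M - 1)
    (hr1 : 1 ≤ r) (hrb : r ≤ (n + M - 2) / (M - 1)) :
    specialMinor a n M k r =
      ∏ t ∈ Finset.range r,
        (if (t + 1) * M - k - t ≤ n
          then (gea a n M ((t + 1) * M - k - t)).leadingCoeff else 0) := by
  have hebound : ∀ t, t < r → eIdx M k t ≤ n + M - 2 := by
    intro t ht
    have h1 : eIdx M k t ≤ eIdx M k (r - 1) := eIdx_mono M k (by omega)
    have h2 : eIdx M k (r - 1) ≤ r * (M - 1) := by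
      have h5 : r * (M - 1) = (r - 1) * (M - 1) + (M - 1) := by
        conv_lhs => rw [show r = (r - 1) + 1 by omega]
        ring
      unfold eIdx
      omega
    have h3 : r * (M - 1) ≤ (n + M - 2) / (M - 1) * (M - 1) := Nat.mul_le_mul_right _ hrb
    have h4 : (n + M - 2) / (M - 1) * (M - 1) ≤ n + M - 2 := Nat.div_mul_le_self _ _
    omega
  have hidx : ∀ t : ℕ, (t + 1) * M - k - t = eIdx M k t := by
    intro t
    have h1 := eIdx_spec M k t hM hk1 hkM
    have h2 : (t + 1) * M = M * (t + 1) := Nat.mul_comm _ _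
    omega
  obtain ⟨r', rfl⟩ : ∃ r', r = r' + 1 := ⟨r - 1, by omega⟩
  set Mat : ℕ → Matrix (Fin (r' + 1)) (Fin (r' + 1)) ℝ := fun σ =>
    Matrix.of fun t j : Fin (r' + 1) =>
      placeRow n M (gea a n M (phi M k (t : ℕ) σ)) (k + (t : ℕ)) (j : ℕ) with hMat
  -- Step 1 : the original minor is Mat 0
  have hinit : specialMinor a n M k (r' + 1) = (Mat 0).det := by
    unfold specialMinor
    congr 1
    ext s j
    rw [hMat]
    simp only [Matrix.of_apply]
    rw [phi_zero]
    have hspec := eIdx_spec M k (s : ℕ) hM hk1 hkM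
    have hiν : ((k + (s : ℕ)) + eIdx M k (s : ℕ) % M) % M = 0 := by
      have hmm : ((k + (s : ℕ)) + eIdx M k (s : ℕ) % M) % M
          = ((k + (s : ℕ)) + eIdx M k (s : ℕ)) % M :=
        Nat.ModEq.add_left _ (Nat.mod_modEq _ _)
      rw [hmm, show k + (s : ℕ) + eIdx M k (s : ℕ) = M * ((s : ℕ) + 1) by omega,
        Nat.mul_mod_right]
    have heq := hEntry_eq_placeRow a n M hM (k + (s : ℕ)) (j : ℕ) (eIdx M k (s : ℕ) % M)
      (by omega) (Nat.mod_lt _ (by omega)) hiν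
    rw [show k - 1 + (s : ℕ) = k + (s : ℕ) - 1 by omega, heq]
  -- Step 2 : row reduction steps
  have hstep : ∀ σ, (Mat σ).det = (Mat (σ + 1)).det := by
    intro σ
    apply Matrix.det_eq_of_forall_row_eq_smul_add_pred (B := Mat (σ + 1)) (c := fun t : Fin r' =>
      if sIdx M k ((t : ℕ) + 1) ≤ σ ∧ σ - sIdx M k ((t : ℕ) + 1) < eIdx M k ((t : ℕ) + 1) / M
      then (gea a n M (phi M k ((t : ℕ) + 1) σ)).leadingCoeff /
            (gea a n M (phi M k ((t : ℕ) + 1) σ + 1)).leadingCoeff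
      else 0)
    · intro j
      rw [hMat]
      simp only [Matrix.of_apply]
      have he0 : eIdx M k 0 = M - k := by unfold eIdx; simp
      have h0 : eIdx M k ((0 : Fin (r' + 1)) : ℕ) / M = 0 := by
        rw [show ((0 : Fin (r' + 1)) : ℕ) = 0 from rfl, he0]
        exact Nat.div_eq_of_lt (by omega)
      rw [phi_step_noop M k _ σ (by omega)]
    · intro i j
      rw [hMat]
      simp only [Matrix.of_apply, Fin.val_succ, Fin.coe_castSucc]
      by_cases hcond : sIdx M k ((i : ℕ) + 1) ≤ σ ∧
          σ - sIdx M k ((i : ℕ) + 1) < eIdx M k ((i : ℕ) + 1) / M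
      · rw [if_pos hcond]
        have hup := phi_step_up M k ((i : ℕ) + 1) σ hcond.1 hcond.2
        have hle := phi_le M k ((i : ℕ) + 1) (σ + 1)
        rw [hup] at hle
        have hb := hebound ((i : ℕ) + 1) (by omega)
        have hφn : phi M k ((i : ℕ) + 1) σ + 2 ≤ n := by omega
        have hrec := gea_rec a n M hM hMn ha0 hnz (phi M k ((i : ℕ) + 1) σ) hφn
        have halign := phi_align M k (i : ℕ) σ hM hkM hcond.1 hcond.2
        rw [hup, hrec, placeRow_sub n M _ _ _ (k + ((i : ℕ) + 1)) (j : ℕ) (by omega),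
          show k + ((i : ℕ) + 1) - 1 = k + (i : ℕ) by omega, halign]
        ring
      · rw [if_neg hcond, zero_mul, add_zero,
          phi_step_noop M k ((i : ℕ) + 1) σ hcond]
  have hchain : ∀ σ, (Mat 0).det = (Mat σ).det := by
    intro σ
    induction σ with
    | zero => rfl
    | succ σ' ih => rw [ih, hstep σ']
  set SF := sIdx M k r' + eIdx M k r' with hSF
  have hfin : ∀ t : Fin (r' + 1), phi M k (t : ℕ) SF = eIdx M k (t : ℕ) := by
    intro t
    apply phi_final
    have h1 : sIdx M k (t : ℕ) ≤ sIdx M k r' := sIdx_mono M k (by omega)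
    have h2 : eIdx M k (t : ℕ) / M ≤ eIdx M k (t : ℕ) := Nat.div_le_self _ _
    have h3 : eIdx M k (t : ℕ) ≤ eIdx M k r' := eIdx_mono M k (by omega)
    omega
  -- Step 3 : the final matrix is upper triangular
  have htri : (Mat SF).BlockTriangular id := by
    intro i j hij
    have hij' : (j : ℕ) < (i : ℕ) := hij
    rw [hMat]
    simp only [Matrix.of_apply]
    rw [hfin i]
    by_cases hen : eIdx M k (i : ℕ) ≤ n
    · unfold placeRow
      by_cases hcnd : M * ((j : ℕ) + 1) ≤ n + (k + (i : ℕ))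
      · rw [if_pos hcnd]
        apply Polynomial.coeff_eq_zero_of_natDegree_lt
        have hnd : (gea a n M (eIdx M k (i : ℕ))).natDegree = n - eIdx M k (i : ℕ) :=
          Polynomial.natDegree_eq_of_degree_eq_some
            (deg_gea a n M hM hMn ha0 hnz _ hen)
        have hspec := eIdx_spec M k (i : ℕ) hM hk1 hkM
        have hsum : M * ((j : ℕ) + 1) + M * ((i : ℕ) - (j : ℕ)) = M * ((i : ℕ) + 1) := by
          rw [← Nat.mul_add]
          congr 1
          omega
        have hMle : M ≤ M * ((i : ℕ) - (j : ℕ)) := Nat.le_mul_of_pos_right M (by omega)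
        omega
      · rw [if_neg hcnd]
    · rw [gea_zero_of_gt a n M hM hMn ha0 hnz _ (by omega) (hebound (i : ℕ) (by omega))]
      unfold placeRow
      simp
  rw [hinit, hchain SF, Matrix.det_of_upperTriangular htri]
  rw [hMat]
  simp only [Matrix.of_apply]
  rw [Fin.prod_univ_eq_prod_range (fun t =>
    placeRow n M (gea a n M (phi M k t SF)) (k + t) t)]
  apply Finset.prod_congr rfl
  intro t ht
  rw [Finset.mem_range] at ht
  rw [hidx t]
  have hφt : phi M k t SF = eIdx M k t := hfin ⟨t, ht⟩
  rw [hφt]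
  have hspec := eIdx_spec M k t hM hk1 hkM
  by_cases hen : eIdx M k t ≤ n
  · rw [if_pos hen]
    unfold placeRow
    rw [if_pos (by omega)]
    have hnd : (gea a n M (eIdx M k t)).natDegree = n - eIdx M k t :=
      Polynomial.natDegree_eq_of_degree_eq_some (deg_gea a n M hM hMn ha0 hnz _ hen)
    rw [show n + (k + t) - M * (t + 1) = n - eIdx M k t by omega, ← hnd]
    exact Polynomial.coeff_natDegree
  · rw [if_neg hen, gea_zero_of_gt a n M hM hMn ha0 hnz _ (by omega) (hebound t ht)]
    unfold placeRow
    simp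
end SMaux

/-- In the non-degenerate case of the generalized Euclidean algorithm, for every
`1 ≤ k ≤ M-1` and `1 ≤ r ≤ ⌈n/(M-1)⌉`, the special minor `H_M(k,r)` equals the product
`h_{M-k} · h_{2M-k-1} ⋯ h_{rM-k-(r-1)}`, where `h_i` is the leading coefficient of `f_i`
and `h_i := 0` for `i > n`. -/
theorem special_minor_eq_prod_leading_coeffs
    (n M : ℕ) (a : ℕ → ℝ) (ha0 : 0 < a 0) (hM : 2 ≤ M) (hMn : M ≤ n)
    (hnz : ∀ i ≤ n, gea a n M i ≠ 0) :
    ∀ k r : ℕ, 1 ≤ k → k ≤ M - 1 → 1 ≤ r → r ≤ (n + M - 2) / (M - 1) →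
      specialMinor a n M k r =
        ∏ t ∈ Finset.range r,
          (if (t + 1) * M - k - t ≤ n
            then (gea a n M ((t + 1) * M - k - t)).leadingCoeff else 0) := by
  intro k r hk1 hkM hr1 hrb
  exact SMaux.main_lemma a n M hM hMn (ne_of_gt ha0) hnz k r hk1 hkM hr1 hrb
end

section
/- Let f(x) = a_0 x^n + ... + a_n be a real polynomial of degree n with a_0 > 0, let 2 ≤ M ≤ n, and suppose that none of the polynomials f_0, f_1, ..., f_n produced by the generalized Euclidean algorithm with step M is the zero polynomial. Then for every i = 1, ..., n, the minor H_M(k+1, r−1) is nonzero and the leading coefficient h_i of f_i satisfies h_i = H_M(k+1, r) / H_M(k+1, r−1), where r = ⌈ i/(M−1) ⌉, k = r(M−1) − i, and H_M(k+1, 0) := 1. -/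
open Polynomial

section Aux

variable {a : ℕ → ℝ} {n M : ℕ}

lemma gea_lt {j : ℕ} (h : j < M) : gea a n M j = geaInit a n M j := by
  rw [gea]; simp [h]

lemma gea_add (hM : 2 ≤ M) (j : ℕ) : gea a n M (j + M) = gea a n M j % gea a n M (j + 1) := by
  rw [gea]
  have : ¬ (j + M < M) := by omega
  simp [this, hM]

lemma geaInit_coeff {l j : ℕ} (hl : l ≤ n) (hm : l % M = j) :
    (geaInit a n M j).coeff (n - l) = a l := by
  unfold geaInit
  rw [finset_sum_coeff, Finset.sum_eq_single l]
  · simp [hm]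
  · intro b hb hbl
    simp only [Finset.mem_range] at hb
    split
    · rw [coeff_C_mul, coeff_X_pow, if_neg (by omega), mul_zero]
    · simp
  · intro h; exact absurd (Finset.mem_range.2 (by omega)) h

lemma geaInit_support {e j : ℕ} (he : e ∈ (geaInit a n M j).support) (hj : j < M) :
    ∃ l, l ≤ n ∧ l % M = j ∧ e = n - l ∧ j ≤ l := by
  classical
  have h0 : (geaInit a n M j).coeff e ≠ 0 := mem_support_iff.mp he
  unfold geaInit at h0
  rw [finset_sum_coeff] at h0
  obtain ⟨l, hl, hne⟩ := Finset.exists_ne_zero_of_sum_ne_zero h0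
  simp only [Finset.mem_range] at hl
  by_cases hc : l % M = j
  · rw [if_pos hc, coeff_C_mul, coeff_X_pow] at hne
    by_cases he' : e = n - l
    · exact ⟨l, by omega, hc, he', hc ▸ Nat.mod_le l M⟩
    · rw [if_neg he', mul_zero] at hne; exact absurd rfl hne
  · rw [if_neg hc] at hne; simp at hne


lemma modByMonic_support_class {M : ℕ} (u v : ZMod M) :
    ∀ N (p q : Polynomial ℝ), p.natDegree ≤ N → q.Monic →
    (∀ e ∈ p.support, (e : ZMod M) = u) → (∀ e ∈ q.support, (e : ZMod M) = v) →
    ∀ e ∈ (p %ₘ q).support, (e : ZMod M) = u := by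
  intro N
  induction N using Nat.strong_induction_on with
  | _ N IH =>
    intro p q hdeg hq hp hqs
    by_cases hlt : p.degree < q.degree
    · rw [(modByMonic_eq_self_iff hq).2 hlt]; exact hp
    · have hq0 : q ≠ 0 := hq.ne_zero
      have hp0 : p ≠ 0 := by
        rintro rfl
        refine hlt ?_
        rw [degree_zero]
        simp [bot_lt_iff_ne_bot, degree_eq_bot, hq0]
      have hdq : q.natDegree ≤ p.natDegree := natDegree_le_natDegree (not_lt.mp hlt)
      set d := p.natDegree - q.natDegree with hd
      set c := p.leadingCoeff with hc
      have hc0 : c ≠ 0 := leadingCoeff_ne_zero.mpr hp0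
      set p' := p - C c * X ^ d * q with hp'
      have key : p %ₘ q = p' %ₘ q := by
        have h1 := modByMonic_add_div p' q
        have := div_modByMonic_unique (f := p) (g := q) (p' /ₘ q + C c * X ^ d) (p' %ₘ q) hq
          ⟨by rw [mul_add, ← add_assoc, h1, hp']; ring, degree_modByMonic_lt _ hq⟩
        exact this.2
      have hCX0 : C c * X ^ d ≠ 0 := mul_ne_zero (by simpa using hc0) (pow_ne_zero _ X_ne_zero)
      have hCXq0 : C c * X ^ d * q ≠ 0 := mul_ne_zero hCX0 hq0
      have hndCXq : (C c * X ^ d * q).natDegree = p.natDegree := by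
        rw [natDegree_mul hCX0 hq0, natDegree_C_mul_X_pow d c hc0]
        omega
      have hsub : ∀ e : ℕ, e ∈ (C c * X ^ d * q).support → (e : ZMod M) = u := by
        intro e he
        have h2 : (C c * X ^ d * q).coeff e ≠ 0 := mem_support_iff.mp he
        rw [mul_assoc, coeff_C_mul] at h2
        have h3 : (X ^ d * q).coeff e ≠ 0 := fun h => h2 (by rw [h, mul_zero])
        rw [coeff_X_pow_mul'] at h3
        by_cases hde : d ≤ e
        · rw [if_pos hde] at h3
          have hv : ((e - d : ℕ) : ZMod M) = v := hqs _ (mem_support_iff.mpr h3)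
          have hu : ((p.natDegree : ℕ) : ZMod M) = u :=
            hp _ (natDegree_mem_support_of_nonzero hp0)
          have hvq : ((q.natDegree : ℕ) : ZMod M) = v :=
            hqs _ (natDegree_mem_support_of_nonzero hq0)
          have he' : (e : ZMod M) = ((e - d : ℕ) : ZMod M) + ((d : ℕ) : ZMod M) := by
            rw [← Nat.cast_add]; congr 1; omega
          rw [he', hv, hd, Nat.cast_sub hdq, hu, hvq]
          ring
        · rw [if_neg hde] at h3; exact absurd rfl h3
      have hp's : ∀ e : ℕ, e ∈ p'.support → (e : ZMod M) = u := by
        intro e he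
        have h4 : p'.coeff e ≠ 0 := mem_support_iff.mp he
        rw [hp', coeff_sub] at h4
        by_cases h1 : p.coeff e ≠ 0
        · exact hp _ (mem_support_iff.mpr h1)
        · push_neg at h1
          rw [h1, zero_sub, neg_ne_zero] at h4
          exact hsub _ (mem_support_iff.mpr h4)
      by_cases hp'0 : p' = 0
      · rw [key, hp'0, zero_modByMonic]; intro e he; simp at he
      · have hdlt : p'.degree < p.degree := by
          refine degree_sub_lt ?_ hp0 ?_
          · rw [degree_eq_natDegree hp0, degree_eq_natDegree hCXq0, hndCXq]
          · rw [hc, mul_assoc, leadingCoeff_mul, leadingCoeff_mul, leadingCoeff_C,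
              leadingCoeff_X_pow, hq.leadingCoeff]
            ring
        have hnd' : p'.natDegree < p.natDegree := natDegree_lt_natDegree hp'0 hdlt
        rw [key]
        exact IH p'.natDegree (by omega) p' q le_rfl hq hp's hqs

lemma mod_degree_lt (p : Polynomial ℝ) {q : Polynomial ℝ} (hq : q ≠ 0) :
    (p % q).degree < q.degree := by
  rw [mod_def, ← degree_mul_leadingCoeff_inv q hq]
  exact degree_modByMonic_lt _ (monic_mul_leadingCoeff_inv hq)

lemma mod_support_class (u v : ZMod M) (p q : Polynomial ℝ)
    (hp : ∀ e ∈ p.support, (e : ZMod M) = u) (hq : ∀ e ∈ q.support, (e : ZMod M) = v) :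
    ∀ e ∈ (p % q).support, (e : ZMod M) = u := by
  by_cases hq0 : q = 0
  · rw [hq0, mod_def]
    simpa [modByMonic_zero] using hp
  · rw [mod_def]
    refine modByMonic_support_class u v p.natDegree p _ le_rfl
      (monic_mul_leadingCoeff_inv hq0) hp ?_
    intro e he
    have h1 : (q * C q.leadingCoeff⁻¹).coeff e ≠ 0 := mem_support_iff.mp he
    rw [coeff_mul_C] at h1
    exact hq e (mem_support_iff.mpr fun h => h1 (by rw [h, zero_mul]))

lemma phase1 (hM : 2 ≤ M) (hMn : M ≤ n) (hnz : ∀ i ≤ n, gea a n M i ≠ 0) :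
    ∀ i, i ≤ n → (gea a n M i).natDegree + i ≤ n ∧
      ∀ e ∈ (gea a n M i).support, (e : ZMod M) + (i : ZMod M) = (n : ZMod M) := by
  intro i
  induction i using Nat.strong_induction_on with
  | _ i IH =>
    intro hi
    by_cases hiM : i < M
    · rw [gea_lt hiM]
      have hsupp : ∀ e ∈ (geaInit a n M i).support, (e : ZMod M) + (i : ZMod M) = (n : ZMod M) := by
        intro e he
        obtain ⟨l, hl, hlm, rfl, hjl⟩ := geaInit_support he hiM
        have h1 : ((n - l : ℕ) : ZMod M) = (n : ZMod M) - (l : ZMod M) := Nat.cast_sub hl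
        have h2 : (l : ZMod M) = (i : ZMod M) := by
          conv_lhs => rw [← Nat.div_add_mod l M]
          push_cast [hlm]
          simp [ZMod.natCast_self]
        rw [h1, h2]; ring
      refine ⟨?_, hsupp⟩
      by_cases h0 : geaInit a n M i = 0
      · rw [h0]; simpa using hi
      · obtain ⟨l, hl, hlm, he, hjl⟩ :=
          geaInit_support (natDegree_mem_support_of_nonzero h0) hiM
        omega
    · obtain ⟨j, rfl⟩ : ∃ j, i = j + M := ⟨i - M, by omega⟩
      have IHj := IH j (by omega) (by omega)
      have IHj1 := IH (j+1) (by omega) (by omega)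
      have hmod := gea_add (a := a) (n := n) hM j
      have hq0 : gea a n M (j+1) ≠ 0 := hnz _ (by omega)
      have hclass : ∀ e ∈ (gea a n M (j + M)).support,
          (e : ZMod M) = (n : ZMod M) - (j : ZMod M) := by
        rw [hmod]
        refine mod_support_class _ ((n : ZMod M) - ((j+1 : ℕ) : ZMod M)) _ _ ?_ ?_
        · intro e he; exact eq_sub_of_add_eq (IHj.2 e he)
        · intro e he; exact eq_sub_of_add_eq (IHj1.2 e he)
      have hclass' : ∀ e ∈ (gea a n M (j + M)).support,
          (e : ZMod M) + ((j + M : ℕ) : ZMod M) = (n : ZMod M) := by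
        intro e he
        have := hclass e he
        push_cast [ZMod.natCast_self]
        rw [this]; ring
      refine ⟨?_, hclass'⟩
      by_cases h0 : gea a n M (j + M) = 0
      · rw [h0]; simpa using hi
      · have hdlt : (gea a n M (j + M)).degree < (gea a n M (j+1)).degree := by
          rw [hmod]; exact mod_degree_lt _ hq0
        have hDlt : (gea a n M (j + M)).natDegree < (gea a n M (j+1)).natDegree :=
          natDegree_lt_natDegree h0 hdlt
        set D := (gea a n M (j + M)).natDegree with hD
        have hcls : (D : ZMod M) + ((j + M : ℕ) : ZMod M) = (n : ZMod M) :=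
          hclass' D (natDegree_mem_support_of_nonzero h0)
        have hme : D + (j + M) ≡ n [MOD M] := by
          rw [← ZMod.natCast_eq_natCast_iff]
          push_cast
          push_cast at hcls
          linear_combination hcls
        by_contra hgt
        push_neg at hgt
        have hdvd : M ∣ (D + (j + M)) - n := (Nat.modEq_iff_dvd' (by omega)).mp hme.symm
        have := Nat.le_of_dvd (by omega) hdvd
        omega

lemma class_of_natDegree (hM : 2 ≤ M) (hMn : M ≤ n) (hnz : ∀ i ≤ n, gea a n M i ≠ 0)
    {i : ℕ} (hi : i ≤ n) :
    (gea a n M i).natDegree + i ≡ n [MOD M] := by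
  have h0 : gea a n M i ≠ 0 := hnz i hi
  have hcls := (phase1 hM hMn hnz i hi).2 _ (natDegree_mem_support_of_nonzero h0)
  rw [← ZMod.natCast_eq_natCast_iff]
  push_cast
  push_cast at hcls
  linear_combination hcls

lemma defprop (hM : 2 ≤ M) (hMn : M ≤ n) (hnz : ∀ i ≤ n, gea a n M i ≠ 0) :
    ∀ k i, n - i ≤ k → 1 ≤ i → i ≤ n → ¬ ((gea a n M i).natDegree + i + M ≤ n) := by
  intro k
  induction k with
  | zero => intro i h1 h2 h3 hbad; omega
  | succ k IHk =>
    intro i h1 h2 h3 hbad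
    -- consider i' = i + M - 1 = (i-1) + M
    have hi' : i + M - 1 ≤ n := by omega
    have hieq : i + M - 1 = (i - 1) + M := by omega
    have hmod : gea a n M ((i-1) + M) = gea a n M (i-1) % gea a n M (i-1+1) := gea_add hM (i-1)
    have hi1 : i - 1 + 1 = i := by omega
    rw [hi1] at hmod
    have hq0 : gea a n M i ≠ 0 := hnz i h3
    have h0' : gea a n M (i + M - 1) ≠ 0 := hnz _ hi'
    have hdlt : (gea a n M (i + M - 1)).degree < (gea a n M i).degree := by
      rw [hieq, hmod]; exact mod_degree_lt _ hq0
    have hDlt : (gea a n M (i + M - 1)).natDegree < (gea a n M i).natDegree :=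
      natDegree_lt_natDegree h0' hdlt
    set D' := (gea a n M (i + M - 1)).natDegree with hD'
    have hle' : D' + (i + M - 1) ≤ n := (phase1 hM hMn hnz _ hi').1
    have hcls' : D' + (i + M - 1) ≡ n [MOD M] := class_of_natDegree hM hMn hnz hi'
    -- deficiency at i' is ≥ M as well
    have hbad' : D' + (i + M - 1) + M ≤ n := by
      by_contra hc
      push_neg at hc
      have hdvd : M ∣ n - (D' + (i + M - 1)) := (Nat.modEq_iff_dvd' (by omega)).mp hcls'
      rcases Nat.eq_zero_or_pos (n - (D' + (i + M - 1))) with h | h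
      · omega
      · have := Nat.le_of_dvd h hdvd; omega
    exact IHk (i + M - 1) (by omega) (by omega) (by omega) hbad'

lemma phase2 (hM : 2 ≤ M) (hMn : M ≤ n) (hnz : ∀ i ≤ n, gea a n M i ≠ 0) (ha0 : a 0 ≠ 0) :
    ∀ i ≤ n, (gea a n M i).natDegree + i = n := by
  intro i hi
  rcases Nat.eq_zero_or_pos i with rfl | hpos
  · have h1 : (gea a n M 0).coeff n ≠ 0 := by
      rw [gea_lt (by omega)]
      have h := geaInit_coeff (a := a) (n := n) (M := M) (l := 0) (j := 0) (by omega) (by simp)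
      rw [Nat.sub_zero] at h
      rw [h]
      exact ha0
    have h2 := le_natDegree_of_ne_zero h1
    have h3 := (phase1 hM hMn hnz 0 (by omega)).1
    omega
  · have h1 := (phase1 hM hMn hnz i hi).1
    have h2 := class_of_natDegree hM hMn hnz hi
    have h3 := defprop hM hMn hnz (n - i) i le_rfl hpos hi
    by_contra hne
    have hdvd : M ∣ n - ((gea a n M i).natDegree + i) := (Nat.modEq_iff_dvd' (by omega)).mp h2
    rcases Nat.eq_zero_or_pos (n - ((gea a n M i).natDegree + i)) with h | h
    · omega
    · have := Nat.le_of_dvd h hdvd; omega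

lemma coeff_class (hM : 2 ≤ M) (hMn : M ≤ n) (hnz : ∀ i ≤ n, gea a n M i ≠ 0)
    {i e : ℕ} (hi : i ≤ n) (h : (gea a n M i).coeff e ≠ 0) : e + i ≡ n [MOD M] := by
  have hcls := (phase1 hM hMn hnz i hi).2 e (mem_support_iff.mpr h)
  rw [← ZMod.natCast_eq_natCast_iff]
  push_cast
  push_cast at hcls
  linear_combination hcls

lemma phase3 (hM : 2 ≤ M) (hMn : M ≤ n) (hnz : ∀ i ≤ n, gea a n M i ≠ 0) (ha0 : a 0 ≠ 0)
    (j : ℕ) (hj : j + M ≤ n) :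
    gea a n M (j + M) = gea a n M j -
      C ((gea a n M j).leadingCoeff / (gea a n M (j+1)).leadingCoeff) * (X * gea a n M (j+1)) := by
  set p := gea a n M j with hp
  set q := gea a n M (j+1) with hq
  have hp0 : p ≠ 0 := hnz j (by omega)
  have hq0 : q ≠ 0 := hnz (j+1) (by omega)
  have hDp : p.natDegree = n - j := by
    have h := phase2 hM hMn hnz ha0 j (by omega); rw [← hp] at h; omega
  have hDq : q.natDegree = n - j - 1 := by
    have h := phase2 hM hMn hnz ha0 (j+1) (by omega); rw [← hq] at h; omega
  have hlcq : q.leadingCoeff ≠ 0 := leadingCoeff_ne_zero.mpr hq0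
  set c := p.leadingCoeff / q.leadingCoeff with hc
  set rem := p - C c * (X * q) with hrem
  have hXq : ∀ m : ℕ, 1 ≤ m → (X * q).coeff m = q.coeff (m - 1) := by
    intro m hm
    obtain ⟨m', rfl⟩ : ∃ m', m = m' + 1 := ⟨m - 1, by omega⟩
    rw [coeff_X_mul]; congr 1
  have hdegrem : rem.degree < ((n - j - 1 : ℕ) : WithBot ℕ) := by
    rw [degree_lt_iff_coeff_zero]
    intro m hm
    have hm' : n - j - 1 ≤ m := hm
    have hm1 : 1 ≤ m := by omega
    rw [hrem, coeff_sub, coeff_C_mul, hXq m hm1]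
    rcases lt_trichotomy m (n - j) with h | h | h
    · -- m = n - j - 1
      have hmeq : m = n - j - 1 := by omega
      have h1 : p.coeff m = 0 := by
        by_contra hne
        have := coeff_class hM hMn hnz (by omega) hne
        have hdvd : M ∣ n - (m + j) := (Nat.modEq_iff_dvd' (by omega)).mp this
        have : m + j = n - 1 := by omega
        rcases Nat.eq_zero_or_pos (n - (m+j)) with h' | h'
        · omega
        · have := Nat.le_of_dvd h' hdvd; omega
      have h2 : q.coeff (m - 1) = 0 := by
        by_contra hne
        have := coeff_class hM hMn hnz (by omega) hne
        have hdvd : M ∣ n - ((m-1) + (j+1)) := (Nat.modEq_iff_dvd' (by omega)).mp this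
        rcases Nat.eq_zero_or_pos (n - ((m-1)+(j+1))) with h' | h'
        · omega
        · have := Nat.le_of_dvd h' hdvd; omega
      rw [h1, h2, mul_zero, sub_zero]
    · -- m = n - j : leading coefficients cancel
      have h1 : p.coeff m = p.leadingCoeff := by rw [h, ← hDp]; rfl
      have h2 : q.coeff (m - 1) = q.leadingCoeff := by
        have : m - 1 = q.natDegree := by omega
        rw [this]; rfl
      rw [h1, h2, hc, div_mul_cancel₀ _ hlcq, sub_self]
    · -- m > n - j
      have h1 : p.coeff m = 0 := coeff_eq_zero_of_natDegree_lt (by omega)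
      have h2 : q.coeff (m - 1) = 0 := coeff_eq_zero_of_natDegree_lt (by omega)
      rw [h1, h2, mul_zero, sub_zero]
  have hdegq : q.degree = ((n - j - 1 : ℕ) : WithBot ℕ) := by
    rw [degree_eq_natDegree hq0, hDq]
  have hmonic : (q * C q.leadingCoeff⁻¹).Monic := monic_mul_leadingCoeff_inv hq0
  have hscal : q.leadingCoeff⁻¹ * (c * q.leadingCoeff) = c := by field_simp
  have hqq : q * C q.leadingCoeff⁻¹ * (C (c * q.leadingCoeff) * X) = C c * (X * q) := by
    have h1 : C q.leadingCoeff⁻¹ * C (c * q.leadingCoeff) = C c := by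
      rw [← C_mul, hscal]
    calc q * C q.leadingCoeff⁻¹ * (C (c * q.leadingCoeff) * X)
        = (C q.leadingCoeff⁻¹ * C (c * q.leadingCoeff)) * (X * q) := by ring
      _ = C c * (X * q) := by rw [h1]
  have huniq := div_modByMonic_unique (f := p) (g := q * C q.leadingCoeff⁻¹)
    (C (c * q.leadingCoeff) * X) rem hmonic
    ⟨by rw [hqq, hrem]; ring, by
      rw [degree_mul_leadingCoeff_inv q hq0, hdegq]; exact hdegrem⟩
  rw [gea_add hM j, ← hp, ← hq, mod_def, huniq.2, hrem]

noncomputable def MatP (a : ℕ → ℝ) (n M k r : ℕ) (u : ℕ → ℕ) : Matrix (Fin r) (Fin r) ℝ :=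
  Matrix.of fun s t : Fin r => (X ^ (M*((t:ℕ)+1)) * gea a n M (u (s:ℕ))).coeff (n+k+(s:ℕ)+1)

lemma det_step (hM : 2 ≤ M) (hMn : M ≤ n) (hnz : ∀ i ≤ n, gea a n M i ≠ 0) (ha0 : a 0 ≠ 0)
    {k r : ℕ} (u : ℕ → ℕ) (s0 : ℕ) (h1 : 1 ≤ s0) (hr : s0 < r)
    (hrel : u (s0-1) = u s0 + 1) (hb : u s0 + M ≤ n) :
    (MatP a n M k r (Function.update u s0 (u s0 + M))).det = (MatP a n M k r u).det := by
  set c := (gea a n M (u s0)).leadingCoeff / (gea a n M (u s0 + 1)).leadingCoeff with hc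
  have key := phase3 hM hMn hnz ha0 (u s0) hb
  set i : Fin r := ⟨s0, hr⟩ with hi
  set i' : Fin r := ⟨s0 - 1, by omega⟩ with hi'
  have hne : i ≠ i' := by
    intro h
    have := congrArg Fin.val h
    simp only [hi, hi'] at this
    omega
  have hMeq : MatP a n M k r (Function.update u s0 (u s0 + M)) =
      Matrix.updateRow (MatP a n M k r u) i ((MatP a n M k r u) i + (-c) • (MatP a n M k r u) i') := by
    ext s t
    by_cases hs : s = i
    · subst hs
      rw [Matrix.updateRow_self]
      show (X ^ (M*((t:ℕ)+1)) * gea a n M (Function.update u s0 (u s0 + M) s0)).coeff (n+k+s0+1) = _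
      rw [Function.update_self, key]
      have hexp : X ^ (M*((t:ℕ)+1)) * (gea a n M (u s0) -
          C c * (X * gea a n M (u s0 + 1))) =
          X ^ (M*((t:ℕ)+1)) * gea a n M (u s0) -
          C c * (X * (X ^ (M*((t:ℕ)+1)) * gea a n M (u s0 + 1))) := by ring
      rw [hexp, coeff_sub, coeff_C_mul]
      have h2 : n+k+s0+1 = (n+k+(s0-1)+1)+1 := by omega
      rw [h2, coeff_X_mul]
      show _ = (MatP a n M k r u) i t + (-c) • (MatP a n M k r u) i' t
      show _ = (X ^ (M*((t:ℕ)+1)) * gea a n M (u s0)).coeff (n+k+s0+1)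
        + (-c) * (X ^ (M*((t:ℕ)+1)) * gea a n M (u (s0-1))).coeff (n+k+(s0-1)+1)
      rw [hrel, h2]
      ring
    · rw [Matrix.updateRow_ne hs]
      show (X ^ (M*((t:ℕ)+1)) * gea a n M (Function.update u s0 (u s0 + M) (s:ℕ))).coeff _ = _
      rw [Function.update_of_ne (by intro hh; exact hs (by ext; simp [hh, hi]))]
      rfl
  rw [hMeq, Matrix.det_updateRow_add_smul_self _ hne]

lemma geaInit_natDegree_le {j : ℕ} (hj : j < M) : (geaInit a n M j).natDegree ≤ n := by
  by_cases h0 : geaInit a n M j = 0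
  · rw [h0]; simp
  · obtain ⟨l, hl, _, he, _⟩ := geaInit_support (natDegree_mem_support_of_nonzero h0) hj
    omega

lemma hEntry_eq (hM : 2 ≤ M) {k w s t : ℕ} (hw1 : M*w ≤ k+s) (hw2 : k+s < M*w+M) :
    hEntry a n M (k+s) t =
      (X ^ (M*(t+1)) * gea a n M (M*w + M - 1 - k - s)).coeff (n+k+s+1) := by
  set u := M*w + M - 1 - k - s with hu
  have huM : u < M := by omega
  have hukey : u + (k+s) + 1 = M*w + M := by omega
  rw [gea_lt huM, coeff_X_pow_mul']
  unfold hEntry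
  by_cases hA : k+s+1 ≤ M*(t+1) ∧ M*(t+1) - (k+s+1) ≤ n
  · set l := M*(t+1) - (k+s+1) with hl
    rw [if_pos (by omega)]
    have htw : w ≤ t := by
      by_contra hlt
      push_neg at hlt
      have : M*(t+1) ≤ M*w := Nat.mul_le_mul_left M (by omega)
      omega
    obtain ⟨δ, rfl⟩ : ∃ δ, t = w + δ := ⟨t - w, by omega⟩
    have hMt : M*(w+δ+1) = M*w + M + M*δ := by ring
    have hlδ : l = M*δ + u := by omega
    have hlM : l % M = u := by rw [hlδ, Nat.mul_add_mod, Nat.mod_eq_of_lt huM]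
    have hcoe : n+k+s+1 - M*(w+δ+1) = n - l := by omega
    rw [if_pos (by omega), hcoe, geaInit_coeff (by omega) hlM]
  · rw [if_neg hA]
    by_cases hB : M*(t+1) ≤ n+k+s+1
    · rw [if_pos hB]
      -- then necessarily M*(t+1) < k+s+1, so the exponent exceeds n
      have hC : M*(t+1) < k+s+1 := by omega
      have hd := geaInit_natDegree_le (a := a) (n := n) (M := M) huM
      exact coeff_eq_zero_of_natDegree_lt (p := geaInit a n M u) (n := n+k+s+1 - M*(t+1)) (by omega) |>.symm
    · rw [if_neg hB]

def profD (M k m b : ℕ) : ℕ → ℕ :=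
  fun s => M * (max ((k+s)/M) (min s (if b ≤ s then m+1 else m))) + M - 1 - k - s

lemma w_le_self {k s : ℕ} (hM : 2 ≤ M) (hk : k + 2 ≤ M) : (k+s)/M ≤ s := by
  have h1 : s ≤ M*s := Nat.le_mul_of_pos_left s (by omega)
  have h2 : (k+s)/M < s+1 := by
    rw [Nat.div_lt_iff_lt_mul (by omega : 0 < M)]
    have h3 : (s+1)*M = s*M + M := by ring
    have h4 : s*M = M*s := by ring
    omega
  omega

lemma det_prof_b (hM : 2 ≤ M) (hMn : M ≤ n) (hnz : ∀ i ≤ n, gea a n M i ≠ 0) (ha0 : a 0 ≠ 0)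
    {k r : ℕ} (hk : k + 2 ≤ M) (hrn : r*(M-1) ≤ n + k) (m : ℕ) :
    ∀ j b, m+1 ≤ b → r ≤ b + j →
      (MatP a n M k r (profD M k m b)).det = (MatP a n M k r (profD M k m r)).det := by
  intro j
  induction j with
  | zero =>
    intro b hmb hrb
    congr 1
    unfold MatP profD
    ext s t
    simp only [Matrix.of_apply]
    have hs := s.isLt
    rw [if_neg (by omega), if_neg (by omega)]
  | succ j IHj =>
    intro b hmb hrb
    by_cases hbr : r ≤ b
    · congr 1
      unfold MatP profD
      ext s t
      simp only [Matrix.of_apply]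
      have hs := s.isLt
      rw [if_neg (by omega), if_neg (by omega)]
    · push_neg at hbr
      -- facts about w_b
      have hdm := Nat.div_add_mod (k+b) M
      have hmlt : (k+b) % M < M := Nat.mod_lt _ (by omega)
      have hdm1 := Nat.div_add_mod (k+(b-1)) M
      have hmlt1 : (k+(b-1)) % M < M := Nat.mod_lt _ (by omega)
      have hwmono : (k+(b-1))/M ≤ (k+b)/M := Nat.div_le_div_right (by omega)
      by_cases hwb : m+1 ≤ (k+b)/M
      · -- no actual change at row b
        have heq : (MatP a n M k r (profD M k m b)) = (MatP a n M k r (profD M k m (b+1))) := by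
          unfold MatP profD
          ext s t
          simp only [Matrix.of_apply]
          have hs := s.isLt
          by_cases hsb : (s:ℕ) = b
          · rw [if_pos (by omega), if_neg (by omega)]
            have h1 : min (s:ℕ) (m+1) = m+1 := by omega
            have h2 : min (s:ℕ) m = m := by omega
            rw [hsb] at h1 h2 ⊢
            rw [h1, h2]
            have : max ((k+b)/M) (m+1) = max ((k+b)/M) m := by omega
            rw [this]
          · have hif : (if b ≤ (s:ℕ) then m+1 else m) = (if b+1 ≤ (s:ℕ) then m+1 else m) := by
              by_cases h : b ≤ (s:ℕ)
              · rw [if_pos h, if_pos (by omega)]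
              · rw [if_neg h, if_neg (by omega)]
            rw [hif]
        rw [heq]
        exact IHj (b+1) (by omega) (by omega)
      · push_neg at hwb
        have hwb' : (k+b)/M ≤ m := by omega
        -- row b is updated
        have hub : profD M k m (b+1) b = M*m + M - 1 - k - b := by
          unfold profD
          rw [if_neg (by omega)]
          have h2 : min b m = m := by omega
          rw [h2]
          have : max ((k+b)/M) m = m := by omega
          rw [this]
        have hvalid : k + b + 1 ≤ M*m + M := by
          have : M*((k+b)/M) ≤ M*m := Nat.mul_le_mul_left M hwb'
          omega
        have hupdate : profD M k m b = Function.update (profD M k m (b+1)) b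
            (profD M k m (b+1) b + M) := by
          funext s
          by_cases hsb : s = b
          · subst hsb
            rw [Function.update_self, hub]
            unfold profD
            rw [if_pos (by omega)]
            have h1 : min s (m+1) = m+1 := by omega
            rw [h1]
            have h2 : max ((k+s)/M) (m+1) = m+1 := by omega
            rw [h2]
            have h3 : M*(m+1) = M*m + M := by ring
            omega
          · rw [Function.update_of_ne hsb]
            unfold profD
            have hif : (if b ≤ s then m+1 else m) = (if b+1 ≤ s then m+1 else m) := by
              by_cases h : b ≤ s
              · rw [if_pos h, if_pos (by omega)]
              · rw [if_neg h, if_neg (by omega)]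
            rw [hif]
        have hrel : profD M k m (b+1) (b-1) = profD M k m (b+1) b + 1 := by
          rw [hub]
          unfold profD
          rw [if_neg (by omega)]
          have h1 : min (b-1) m = m := by omega
          rw [h1]
          have h2 : max ((k+(b-1))/M) m = m := by omega
          rw [h2]
          omega
        have hbound : profD M k m (b+1) b + M ≤ n := by
          rw [hub]
          have e1 : (M-1)*(b+1) = M*(b+1) - (b+1) := Nat.sub_one_mul M (b+1)
          have e2 : M*(b+1) = M*b + M := by ring
          have e3 : (M-1)*(b+1) ≤ (M-1)*r := Nat.mul_le_mul_left (M-1) (by omega)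
          have e4 : (M-1)*r = r*(M-1) := by ring
          have e5 : M*(m+1) = M*m + M := by ring
          have e6 : M*(m+1) ≤ M*b := Nat.mul_le_mul_left M (by omega)
          omega
        rw [hupdate, det_step hM hMn hnz ha0 _ b (by omega) hbr hrel hbound]
        exact IHj (b+1) (by omega) (by omega)

lemma det_prof_outer (hM : 2 ≤ M) (hMn : M ≤ n) (hnz : ∀ i ≤ n, gea a n M i ≠ 0) (ha0 : a 0 ≠ 0)
    {k r : ℕ} (hk : k + 2 ≤ M) (hrn : r*(M-1) ≤ n + k) (m : ℕ) :
    (MatP a n M k r (profD M k 0 r)).det = (MatP a n M k r (profD M k m r)).det := by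
  induction m with
  | zero => rfl
  | succ m IHm =>
    rw [IHm, ← det_prof_b hM hMn hnz ha0 hk hrn m r (m+1) le_rfl (by omega)]
    congr 1
    unfold MatP profD
    ext s t
    simp only [Matrix.of_apply]
    have hs := s.isLt
    by_cases hsm : m+1 ≤ (s:ℕ)
    · rw [if_pos hsm, if_neg (show ¬ r ≤ (s:ℕ) by omega)]
    · rw [if_neg hsm, if_neg (show ¬ r ≤ (s:ℕ) by omega)]
      have h1 : min (s:ℕ) m = (s:ℕ) := by omega
      have h2 : min (s:ℕ) (m+1) = (s:ℕ) := by omega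
      rw [h1, h2]

lemma det_final (hM : 2 ≤ M) (hMn : M ≤ n) (hnz : ∀ i ≤ n, gea a n M i ≠ 0) (ha0 : a 0 ≠ 0)
    {k r : ℕ} (hk : k + 2 ≤ M) (hrn : r*(M-1) ≤ n + k) :
    (MatP a n M k r (profD M k r r)).det =
      ∏ s : Fin r, (gea a n M (M*(s:ℕ) + M - 1 - k - (s:ℕ))).leadingCoeff := by
  have hprof : ∀ s : Fin r, profD M k r r (s:ℕ) = M*(s:ℕ) + M - 1 - k - (s:ℕ) := by
    intro s
    have hs := s.isLt
    unfold profD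
    rw [if_neg (by omega)]
    have h1 : min (s:ℕ) r = (s:ℕ) := by omega
    rw [h1]
    have h2 : max ((k+(s:ℕ))/M) (s:ℕ) = (s:ℕ) := by
      have := w_le_self (M := M) (k := k) (s := (s:ℕ)) hM hk
      omega
    rw [h2]
  -- index facts
  have hidx : ∀ s : Fin r, (M*(s:ℕ) + M - 1 - k - (s:ℕ)) + (k + (s:ℕ) + 1) = M*((s:ℕ)+1) ∧
      M*(s:ℕ) + M - 1 - k - (s:ℕ) ≤ n := by
    intro s
    have hs := s.isLt
    have e0 : (s:ℕ) ≤ M*(s:ℕ) := Nat.le_mul_of_pos_left _ (by omega)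
    have e1 : M*((s:ℕ)+1) = M*(s:ℕ) + M := by ring
    have e2 : (M-1)*((s:ℕ)+1) = M*((s:ℕ)+1) - ((s:ℕ)+1) := Nat.sub_one_mul M ((s:ℕ)+1)
    have e3 : (M-1)*((s:ℕ)+1) ≤ (M-1)*r := Nat.mul_le_mul_left (M-1) (by omega)
    have e4 : (M-1)*r = r*(M-1) := by ring
    omega
  have htri : (MatP a n M k r (profD M k r r)).BlockTriangular id := by
    intro s t hts
    simp only [id] at hts
    have hts' : (t:ℕ) < (s:ℕ) := hts
    unfold MatP
    simp only [Matrix.of_apply]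
    rw [hprof s, coeff_X_pow_mul']
    obtain ⟨hkey, hjn⟩ := hidx s
    set jj := M*(s:ℕ) + M - 1 - k - (s:ℕ) with hjj
    have hdeg : (gea a n M jj).natDegree + jj = n := phase2 hM hMn hnz ha0 jj hjn
    by_cases hB : M*((t:ℕ)+1) ≤ n+k+(s:ℕ)+1
    · rw [if_pos hB]
      refine coeff_eq_zero_of_natDegree_lt ?_
      have e5 : M*((t:ℕ)+1) ≤ M*(s:ℕ) := Nat.mul_le_mul_left M (by omega)
      have e1 : M*((s:ℕ)+1) = M*(s:ℕ) + M := by ring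
      omega
    · rw [if_neg hB]
  rw [Matrix.det_of_upperTriangular htri]
  refine Finset.prod_congr rfl ?_
  intro s _
  unfold MatP
  simp only [Matrix.of_apply]
  rw [hprof s, coeff_X_pow_mul']
  obtain ⟨hkey, hjn⟩ := hidx s
  set jj := M*(s:ℕ) + M - 1 - k - (s:ℕ) with hjj
  have hdeg : (gea a n M jj).natDegree + jj = n := phase2 hM hMn hnz ha0 jj hjn
  rw [if_pos (by omega)]
  have hexp : n+k+(s:ℕ)+1 - M*((s:ℕ)+1) = (gea a n M jj).natDegree := by omega
  rw [hexp]
  rfl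

lemma minor_eq_prod (hM : 2 ≤ M) (hMn : M ≤ n) (hnz : ∀ i ≤ n, gea a n M i ≠ 0) (ha0 : a 0 ≠ 0)
    {k r : ℕ} (hk : k + 2 ≤ M) (hrn : r*(M-1) ≤ n + k) :
    specialMinor a n M (k+1) r =
      ∏ s : Fin r, (gea a n M (M*(s:ℕ) + M - 1 - k - (s:ℕ))).leadingCoeff := by
  have hinit : specialMinor a n M (k+1) r = (MatP a n M k r (profD M k 0 r)).det := by
    unfold specialMinor MatP
    congr 1
    ext s t
    simp only [Matrix.of_apply]
    have hs := s.isLt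
    have hks : k + 1 - 1 + (s:ℕ) = k + (s:ℕ) := by omega
    rw [hks]
    have hdm := Nat.div_add_mod (k+(s:ℕ)) M
    have hmlt : (k+(s:ℕ)) % M < M := Nat.mod_lt _ (by omega)
    have h := hEntry_eq (a := a) (n := n) hM (k := k) (w := (k+(s:ℕ))/M) (s := (s:ℕ)) (t := (t:ℕ))
      (by omega) (by omega)
    rw [h]
    congr 2
    unfold profD
    rw [if_neg (by omega)]
    simp
  rw [hinit, det_prof_outer hM hMn hnz ha0 hk hrn r, det_final hM hMn hnz ha0 hk hrn]

theorem main_thm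
    (n M : ℕ) (a : ℕ → ℝ) (ha0 : 0 < a 0) (hM : 2 ≤ M) (hMn : M ≤ n)
    (hnz : ∀ i ≤ n, gea a n M i ≠ 0) :
    ∀ i : ℕ, 1 ≤ i → i ≤ n →
      specialMinor a n M ((i + M - 2) / (M - 1) * (M - 1) - i + 1)
          ((i + M - 2) / (M - 1) - 1) ≠ 0 ∧
      (gea a n M i).leadingCoeff =
        specialMinor a n M ((i + M - 2) / (M - 1) * (M - 1) - i + 1)
            ((i + M - 2) / (M - 1)) /
          specialMinor a n M ((i + M - 2) / (M - 1) * (M - 1) - i + 1)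
            ((i + M - 2) / (M - 1) - 1) := by
  intro i hi1 hin
  have ha0' : a 0 ≠ 0 := ne_of_gt ha0
  set r := (i + M - 2) / (M - 1) with hr
  have hdm : (M-1) * r + (i+M-2) % (M-1) = i+M-2 := by rw [hr]; exact Nat.div_add_mod _ _
  have hmlt : (i+M-2) % (M-1) < M-1 := Nat.mod_lt _ (by omega)
  have hcomm : (M-1)*r = r*(M-1) := by ring
  have hr1 : 1 ≤ r := by
    rcases Nat.eq_zero_or_pos r with h0 | h1
    · rw [h0, Nat.mul_zero] at hdm; omega
    · exact h1
  have hik : i ≤ r*(M-1) := by omega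
  set k := r*(M-1) - i with hk
  have hkM : k + 2 ≤ M := by omega
  have hcomb : r*(M-1) = i + k := by omega
  have hrn : r*(M-1) ≤ n + k := by omega
  have hrmono : (r-1)*(M-1) ≤ r*(M-1) := Nat.mul_le_mul_right _ (by omega)
  have hrn' : (r-1)*(M-1) ≤ n + k := by omega
  obtain ⟨r', hr'⟩ : ∃ r', r = r' + 1 := ⟨r-1, by omega⟩
  have hru : r - 1 = r' := by omega
  -- index bound for the factors
  have hjs : ∀ N' (s : Fin N'), N' ≤ r → M*(s:ℕ) + M - 1 - k - (s:ℕ) ≤ n ∧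
      M*(s:ℕ) + M ≥ k + (s:ℕ) + 1 := by
    intro N' s hN'
    have hs : (s:ℕ) < r := lt_of_lt_of_le s.isLt hN'
    have e0 : (s:ℕ) ≤ M*(s:ℕ) := Nat.le_mul_of_pos_left _ (by omega)
    have e1 : M*((s:ℕ)+1) = M*(s:ℕ) + M := by ring
    have e2 : (M-1)*((s:ℕ)+1) = M*((s:ℕ)+1) - ((s:ℕ)+1) := Nat.sub_one_mul M ((s:ℕ)+1)
    have e3 : (M-1)*((s:ℕ)+1) ≤ (M-1)*r := Nat.mul_le_mul_left (M-1) (by omega)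
    constructor <;> omega
  have hm1 := minor_eq_prod hM hMn hnz ha0' hkM hrn
  have hm0 := minor_eq_prod hM hMn hnz ha0' hkM hrn'
  rw [hru] at hm0
  have hP : ∏ s : Fin r', (gea a n M (M*(s:ℕ) + M - 1 - k - (s:ℕ))).leadingCoeff ≠ 0 := by
    rw [Finset.prod_ne_zero_iff]
    intro s _
    refine leadingCoeff_ne_zero.mpr (hnz _ ?_)
    exact (hjs r' s (by omega)).1
  constructor
  · rw [hru, hm0]; exact hP
  · rw [hm1, hru, hm0, hr']
    rw [Fin.prod_univ_castSucc]
    have hlast : M*((Fin.last r' : Fin (r'+1)):ℕ) + M - 1 - k - ((Fin.last r' : Fin (r'+1)):ℕ) = i := by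
      simp only [Fin.val_last]
      have e0 : (r' : ℕ) ≤ M*r' := Nat.le_mul_of_pos_left _ (by omega)
      have e1 : M*(r'+1) = M*r' + M := by ring
      have e2 : (M-1)*(r'+1) = M*(r'+1) - (r'+1) := Nat.sub_one_mul M (r'+1)
      have e3 : (M-1)*(r'+1) = (r'+1)*(M-1) := by ring
      have e4 : r*(M-1) = (r'+1)*(M-1) := by rw [hr']
      omega
    have hcast : ∀ s : Fin r', ((s.castSucc : Fin (r'+1)):ℕ) = (s:ℕ) := fun s => rfl
    have hfeq : (∏ s : Fin r',
        (gea a n M (M*((s.castSucc : Fin (r'+1)):ℕ) + M - 1 - k - ((s.castSucc : Fin (r'+1)):ℕ))).leadingCoeff) =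
        ∏ s : Fin r', (gea a n M (M*(s:ℕ) + M - 1 - k - (s:ℕ))).leadingCoeff := by
      refine Finset.prod_congr rfl fun s _ => ?_
      rw [hcast]
    rw [hlast, hfeq, mul_comm, mul_div_assoc, div_self hP, mul_one]

end Aux

/-- In the non-degenerate case of the generalized Euclidean algorithm, for `1 ≤ i ≤ n`, the
leading coefficient `h_i` of `f_i` equals the ratio `H_M(k+1,r)/H_M(k+1,r-1)` of special
minors, where `r = ⌈i/(M-1)⌉` and `k = r(M-1) - i`. -/
theorem leading_coeff_eq_ratio_of_special_minors
    (n M : ℕ) (a : ℕ → ℝ) (ha0 : 0 < a 0) (hM : 2 ≤ M) (hMn : M ≤ n)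
    (hnz : ∀ i ≤ n, gea a n M i ≠ 0) :
    ∀ i : ℕ, 1 ≤ i → i ≤ n →
      specialMinor a n M ((i + M - 2) / (M - 1) * (M - 1) - i + 1)
          ((i + M - 2) / (M - 1) - 1) ≠ 0 ∧
      (gea a n M i).leadingCoeff =
        specialMinor a n M ((i + M - 2) / (M - 1) * (M - 1) - i + 1)
            ((i + M - 2) / (M - 1)) /
          specialMinor a n M ((i + M - 2) / (M - 1) * (M - 1) - i + 1)
            ((i + M - 2) / (M - 1) - 1) := by
  exact main_thm n M a ha0 hM hMn hnz
end

section
/- Let M ≥ 2 and n ≥ M be integers. Let w, z_1, ..., z_{M−1} be nonzero complex numbers with 0 ≤ arg w ≤ π/M and 0 ≤ arg z_i ≤ π/M for i = 1, ..., M−1, let a_M, a_{M+1}, ..., a_n be positive reals, and define recursively z_i := a_i w + 1/(z_{i−1} · z_{i−2} ⋯ z_{i−(M−1)}) for i = M, ..., n, assuming each z_i so defined is nonzero. Suppose in addition that −π + π/M ≤ arg z_i ≤ π/M for every i = M, ..., n. Define S(n) := {n−(M−2), ..., n}, S_+(n) := {i ∈ S(n) : arg z_i ≥ 0}, and S_−(n)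 := {i ∈ S(n) : arg z_i < 0}. Then |Σ_{i ∈ S_+(n)} arg z_i| ≤ π(M−1)/M and |Σ_{i ∈ S_−(n)} arg z_i| ≤ π(M−1)/M. -/
open Complex Finset

private lemma sum_mono_nonpos {f : ℕ → ℝ} {s t : Finset ℕ} (h : s ⊆ t)
    (hf : ∀ j ∈ t, j ∉ s → f j ≤ 0) : ∑ j ∈ t, f j ≤ ∑ j ∈ s, f j := by
  have := Finset.sum_le_sum_of_subset_of_nonneg (f := fun j => -f j) h
    (fun j hj hjs => neg_nonneg.2 (hf j hj hjs))
  simp only [Finset.sum_neg_distrib] at this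
  linarith

private lemma argProd (z : ℕ → ℂ) : ∀ (s : Finset ℕ),
    (∀ j ∈ s, z j ≠ 0) → (∀ t ⊆ s, |∑ j ∈ t, (z j).arg| < Real.pi) →
    (∏ j ∈ s, z j).arg = ∑ j ∈ s, (z j).arg := by
  intro s
  induction s using Finset.induction_on with
  | empty => simp
  | @insert a s ha ih =>
    intro h0 hb
    have hprod := ih (fun j hj => h0 j (Finset.mem_insert_of_mem hj))
      (fun t ht => hb t (ht.trans (Finset.subset_insert a s)))
    rw [Finset.prod_insert ha, Finset.sum_insert ha]
    have hane : z a ≠ 0 := h0 a (Finset.mem_insert_self a s)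
    have hpne : (∏ j ∈ s, z j) ≠ 0 :=
      Finset.prod_ne_zero_iff.2 (fun j hj => h0 j (Finset.mem_insert_of_mem hj))
    have hmem := hb (insert a s) subset_rfl
    rw [Finset.sum_insert ha, abs_lt] at hmem
    rw [Complex.arg_mul hane hpne]
    · rw [hprod]
    · rw [hprod]
      exact ⟨hmem.1, hmem.2.le⟩

private lemma arg_add_lower (c u : ℂ) (hc : c ≠ 0) (hu : u.im < 0)
    (hc0 : 0 ≤ c.arg) (hdiff : c.arg - u.arg ≤ Real.pi)
    (hz : (c + u).im < 0) : u.arg ≤ (c + u).arg := by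
  have hune : u ≠ 0 := fun h => by simp [h] at hu
  have hzne : c + u ≠ 0 := fun h => by simp [h] at hz
  have huarg : u.arg < 0 := Complex.arg_neg_iff.2 hu
  have hzarg : (c + u).arg < 0 := Complex.arg_neg_iff.2 hz
  have hsin_eq : ∀ x : ℂ, x ≠ 0 →
      Real.sin ((x * (starRingEnd ℂ) u).arg) = Real.sin (x.arg - u.arg) := by
    intro x hx
    have hcu : (starRingEnd ℂ) u ≠ 0 := by simpa using hune
    have h1 : (((x * (starRingEnd ℂ) u).arg : Real.Angle)) =
        (x.arg : Real.Angle) + (((starRingEnd ℂ) u).arg : Real.Angle) :=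
      Complex.arg_mul_coe_angle hx hcu
    rw [Complex.arg_conj_coe_angle] at h1
    have := congrArg Real.Angle.sin h1
    rw [Real.Angle.sin_coe] at this
    rw [this, ← Real.Angle.coe_neg, ← Real.Angle.coe_add, Real.Angle.sin_coe, sub_eq_add_neg]
  have habs : ∀ x : ℂ, x.im = ‖x‖ * Real.sin x.arg := by
    intro x
    rcases eq_or_ne x 0 with rfl | hx
    · simp
    · rw [Complex.sin_arg, mul_div_cancel₀]
      exact (norm_ne_zero_iff.2 hx)
  have himc : 0 ≤ (c * (starRingEnd ℂ) u).im := by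
    rw [habs, hsin_eq c hc]
    exact mul_nonneg (norm_nonneg _)
      (Real.sin_nonneg_of_nonneg_of_le_pi (by linarith) hdiff)
  have himz : 0 ≤ ((c + u) * (starRingEnd ℂ) u).im := by
    have h2 : ((c + u) * (starRingEnd ℂ) u).im
        = (c * (starRingEnd ℂ) u).im + (u * (starRingEnd ℂ) u).im := by
      rw [add_mul]; simp
    have h3 : (u * (starRingEnd ℂ) u).im = 0 := by
      rw [Complex.mul_conj]; simp
    rw [h2, h3]; linarith
  have hsinz : 0 ≤ Real.sin ((c + u).arg - u.arg) := by
    rw [← hsin_eq (c + u) hzne]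
    rw [habs ((c + u) * (starRingEnd ℂ) u)] at himz
    rcases eq_or_lt_of_le (norm_nonneg ((c + u) * (starRingEnd ℂ) u)) with h | h
    · exfalso
      exact (mul_ne_zero hzne (by simpa using hune)) (norm_eq_zero.1 h.symm)
    · exact nonneg_of_mul_nonneg_right himz h
  by_contra hcon
  push_neg at hcon
  have h4 : (c + u).arg - u.arg < 0 := by linarith
  have h5 : -Real.pi < (c + u).arg - u.arg := by
    have := Complex.neg_pi_lt_arg (c + u)
    linarith
  exact absurd hsinz (not_le.2 (Real.sin_neg_of_neg_of_neg_pi_lt h4 h5))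

/-- Lemma on the recursion `z_i = a_i w + 1/(z_{i-1} ⋯ z_{i-(M-1)})`: the sums of the
positive and of the negative arguments over the window `S(n) = {n-(M-2), ..., n}` are
bounded by `π(M-1)/M` in absolute value. -/
theorem arg_window_sums_bounded
    (M n : ℕ) (hM : 2 ≤ M) (hMn : M ≤ n)
    (w : ℂ) (a : ℕ → ℝ) (z : ℕ → ℂ)
    (hw : w ≠ 0) (hw0 : 0 ≤ w.arg) (hwM : w.arg ≤ Real.pi / M)
    (hzinit : ∀ i, 1 ≤ i → i ≤ M - 1 →
      z i ≠ 0 ∧ 0 ≤ (z i).arg ∧ (z i).arg ≤ Real.pi / M)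
    (hapos : ∀ i, M ≤ i → i ≤ n → 0 < a i)
    (hrec : ∀ i, M ≤ i → i ≤ n →
      z i = (a i : ℂ) * w + (∏ t ∈ Finset.Icc (i - (M - 1)) (i - 1), z t)⁻¹)
    (hznz : ∀ i, M ≤ i → i ≤ n → z i ≠ 0)
    (hzarg : ∀ i, M ≤ i → i ≤ n →
      -Real.pi + Real.pi / M ≤ (z i).arg ∧ (z i).arg ≤ Real.pi / M) :
    |∑ i ∈ (Finset.Icc (n - (M - 2)) n).filter (fun i => 0 ≤ (z i).arg), (z i).arg| ≤
        Real.pi * (M - 1) / M ∧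
    |∑ i ∈ (Finset.Icc (n - (M - 2)) n).filter (fun i => (z i).arg < 0), (z i).arg| ≤
        Real.pi * (M - 1) / M := by
  have hMR : (2:ℝ) ≤ (M:ℝ) := by exact_mod_cast hM
  have hM0 : (0:ℝ) < (M:ℝ) := by linarith
  have hπ := Real.pi_pos
  have hπM : 0 < Real.pi / M := by positivity
  have hπMle : Real.pi / M ≤ Real.pi / 2 := by
    apply div_le_div_of_nonneg_left hπ.le (by norm_num) hMR
  -- basic properties of all z j with 1 ≤ j ≤ n
  have hprop : ∀ j, 1 ≤ j → j ≤ n →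
      z j ≠ 0 ∧ -(Real.pi - Real.pi / M) ≤ (z j).arg ∧ (z j).arg ≤ Real.pi / M := by
    intro j h1 h2
    rcases le_or_gt M j with h | h
    · obtain ⟨hl, hr⟩ := hzarg j h h2
      exact ⟨hznz j h h2, by linarith, hr⟩
    · obtain ⟨h0, hl, hr⟩ := hzinit j h1 (by omega)
      exact ⟨h0, by linarith, hr⟩
  -- bound on positive sums over windows
  have hpos_bound : ∀ i, M - 1 ≤ i → i ≤ n →
      ∑ j ∈ (Finset.Icc (i - (M-2)) i).filter (fun j => 0 ≤ (z j).arg), (z j).arg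
        ≤ Real.pi - Real.pi / M := by
    intro i hi1 hi2
    have hcard : ((Finset.Icc (i - (M-2)) i).filter (fun j => 0 ≤ (z j).arg)).card ≤ M - 1 := by
      calc ((Finset.Icc (i - (M-2)) i).filter (fun j => 0 ≤ (z j).arg)).card
          ≤ (Finset.Icc (i - (M-2)) i).card := Finset.card_filter_le _ _
        _ = M - 1 := by rw [Nat.card_Icc]; omega
    have hsum := Finset.sum_le_card_nsmul
      ((Finset.Icc (i - (M-2)) i).filter (fun j => 0 ≤ (z j).arg)) (fun j => (z j).arg)
      (Real.pi / M) (fun j hj => by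
        have hj' := Finset.mem_filter.1 hj
        have hjI := Finset.mem_Icc.1 hj'.1
        exact (hprop j (by omega) (by omega)).2.2)
    rw [nsmul_eq_mul] at hsum
    have hc : (((Finset.Icc (i - (M-2)) i).filter (fun j => 0 ≤ (z j).arg)).card : ℝ)
        ≤ ((M:ℝ) - 1) := by
      have := (Nat.cast_le (α := ℝ)).2 hcard
      rw [Nat.cast_sub (by omega)] at this
      simpa using this
    have : (((Finset.Icc (i - (M-2)) i).filter (fun j => 0 ≤ (z j).arg)).card : ℝ) * (Real.pi / M)
        ≤ ((M:ℝ) - 1) * (Real.pi / M) := by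
      apply mul_le_mul_of_nonneg_right hc hπM.le
    have heq : ((M:ℝ) - 1) * (Real.pi / M) = Real.pi - Real.pi / M := by
      field_simp
    linarith
  -- the key induction
  have key : ∀ i, M - 1 ≤ i → i ≤ n →
      -(Real.pi - Real.pi / M) ≤
        ∑ j ∈ (Finset.Icc (i - (M-2)) i).filter (fun j => (z j).arg < 0), (z j).arg := by
    intro i hi
    induction i, hi using Nat.le_induction with
    | base =>
      intro _
      have hempty : (Finset.Icc (M - 1 - (M-2)) (M-1)).filter (fun j => (z j).arg < 0) = ∅ := by
        rw [Finset.filter_eq_empty_iff]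
        intro j hj
        rw [Finset.mem_Icc] at hj
        simp only [not_lt]
        exact (hzinit j (by omega) (by omega)).2.1
      rw [hempty]
      simp only [Finset.sum_empty]
      linarith
    | succ i hi ih =>
      intro hsn
      have hin : i ≤ n := by omega
      have IH := ih hin
      set Sp := ∑ j ∈ (Finset.Icc (i - (M-2)) i).filter (fun j => 0 ≤ (z j).arg), (z j).arg
        with hSp_def
      set Sn := ∑ j ∈ (Finset.Icc (i - (M-2)) i).filter (fun j => (z j).arg < 0), (z j).arg
        with hSn_def
      have hSp0 : 0 ≤ Sp :=
        Finset.sum_nonneg (fun j hj => (Finset.mem_filter.1 hj).2)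
      have hSpB : Sp ≤ Real.pi - Real.pi / M := hpos_bound i hi hin
      have hSn0 : Sn ≤ 0 :=
        Finset.sum_nonpos (fun j hj => ((Finset.mem_filter.1 hj).2).le)
      rcases lt_or_ge ((z (i+1)).arg) 0 with hneg | hposk
      · -- hard case: arg z_{i+1} < 0
        have hnz' : ∀ j ∈ Finset.Icc (i - (M-2)) i, z j ≠ 0 := by
          intro j hj
          have hjI := Finset.mem_Icc.1 hj
          exact (hprop j (by omega) (by omega)).1
        -- bound all subset sums
        have hsubsum : ∀ t ⊆ Finset.Icc (i - (M-2)) i, |∑ j ∈ t, (z j).arg| < Real.pi := by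
          intro t ht
          have hdec := Finset.sum_filter_add_sum_filter_not t (fun j => 0 ≤ (z j).arg)
            (fun j => (z j).arg)
          have htpos : ∑ j ∈ t.filter (fun j => 0 ≤ (z j).arg), (z j).arg ≤ Sp := by
            apply Finset.sum_le_sum_of_subset_of_nonneg
              (Finset.filter_subset_filter _ ht)
            intro j hj _
            exact (Finset.mem_filter.1 hj).2
          have htpos0 : 0 ≤ ∑ j ∈ t.filter (fun j => 0 ≤ (z j).arg), (z j).arg :=
            Finset.sum_nonneg (fun j hj => (Finset.mem_filter.1 hj).2)
          have hfneg : t.filter (fun j => ¬ 0 ≤ (z j).arg) = t.filter (fun j => (z j).arg < 0) := by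
            apply Finset.filter_congr; intro j _; simp [not_le]
          have htneg : Sn ≤ ∑ j ∈ t.filter (fun j => (z j).arg < 0), (z j).arg := by
            apply sum_mono_nonpos (Finset.filter_subset_filter _ ht)
            intro j hj _
            exact ((Finset.mem_filter.1 hj).2).le
          have htneg0 : ∑ j ∈ t.filter (fun j => (z j).arg < 0), (z j).arg ≤ 0 :=
            Finset.sum_nonpos (fun j hj => ((Finset.mem_filter.1 hj).2).le)
          rw [hfneg] at hdec
          rw [abs_lt]
          constructor <;> [linarith; linarith]
        -- argument of the product
        have hI : Finset.Icc ((i+1) - (M - 1)) ((i+1) - 1) = Finset.Icc (i - (M-2)) i := by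
          congr 1 <;> omega
        have hSdec := Finset.sum_filter_add_sum_filter_not (Finset.Icc (i - (M-2)) i)
          (fun j => 0 ≤ (z j).arg) (fun j => (z j).arg)
        have hfneg' : (Finset.Icc (i - (M-2)) i).filter (fun j => ¬ 0 ≤ (z j).arg)
            = (Finset.Icc (i - (M-2)) i).filter (fun j => (z j).arg < 0) := by
          apply Finset.filter_congr; intro j _; simp [not_le]
        rw [hfneg'] at hSdec
        have hargP : (∏ t ∈ Finset.Icc (i - (M-2)) i, z t).arg = Sp + Sn := by
          rw [argProd z _ hnz' hsubsum, ← hSdec]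
        have hPne : (∏ t ∈ Finset.Icc (i - (M-2)) i, z t) ≠ 0 :=
          Finset.prod_ne_zero_iff.2 hnz'
        have hSabs : |Sp + Sn| < Real.pi := by
          rw [abs_lt]; constructor <;> [linarith; linarith]
        have hargU : (∏ t ∈ Finset.Icc (i - (M-2)) i, z t)⁻¹.arg = -(Sp + Sn) := by
          rw [Complex.arg_inv, if_neg, hargP]
          rw [hargP]
          intro h
          rw [h] at hSabs
          rw [abs_of_pos hπ] at hSabs
          exact lt_irrefl _ hSabs
        -- the recursion
        have hrk := hrec (i+1) (by omega) hsn
        rw [hI] at hrk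
        have hak : 0 < a (i+1) := hapos (i+1) (by omega) hsn
        set c : ℂ := ((a (i+1) : ℝ) : ℂ) * w with hc_def
        set u : ℂ := (∏ t ∈ Finset.Icc (i - (M-2)) i, z t)⁻¹ with hu_def
        have hcne : c ≠ 0 := mul_ne_zero (Complex.ofReal_ne_zero.2 hak.ne') hw
        have hcarg : c.arg = w.arg := Complex.arg_real_mul w hak
        have hzkim : (z (i+1)).im < 0 := Complex.arg_neg_iff.1 hneg
        have hwim : 0 ≤ w.im := Complex.arg_nonneg_iff.1 hw0
        have hcim : 0 ≤ c.im := by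
          rw [hc_def]
          simp only [Complex.mul_im, Complex.ofReal_re, Complex.ofReal_im]
          have : 0 ≤ a (i+1) * w.im := mul_nonneg hak.le hwim
          linarith
        have huim : u.im < 0 := by
          have h1 : u = z (i+1) - c := by rw [hrk]; ring
          rw [h1, Complex.sub_im]
          linarith
        have hdiff : c.arg - u.arg ≤ Real.pi := by
          rw [hcarg, hu_def, hargU]
          linarith
        have hgeo := arg_add_lower c u hcne huim (hcarg ▸ hw0) hdiff (by rw [← hrk]; exact hzkim)
        rw [← hrk] at hgeo
        rw [hargU] at hgeo
        -- so -(Sp + Sn) ≤ arg z (i+1)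
        -- now bound the new window sum
        have hknotin : (i+1) ∉ (Finset.Icc (i - (M-2)) i).filter (fun j => (z j).arg < 0) := by
          intro h
          have := Finset.mem_Icc.1 (Finset.mem_filter.1 h).1
          omega
        have hsubk : (Finset.Icc ((i+1) - (M-2)) (i+1)).filter (fun j => (z j).arg < 0)
            ⊆ insert (i+1) ((Finset.Icc (i - (M-2)) i).filter (fun j => (z j).arg < 0)) := by
          intro j hj
          obtain ⟨hjI, hjneg⟩ := Finset.mem_filter.1 hj
          have hjI' := Finset.mem_Icc.1 hjI
          rcases eq_or_ne j (i+1) with rfl | hne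
          · exact Finset.mem_insert_self _ _
          · exact Finset.mem_insert_of_mem
              (Finset.mem_filter.2 ⟨Finset.mem_Icc.2 (by omega), hjneg⟩)
        have hmono := sum_mono_nonpos (f := fun j => (z j).arg) hsubk (by
          intro j hj _
          rcases Finset.mem_insert.1 hj with rfl | hj'
          · exact hneg.le
          · exact ((Finset.mem_filter.1 hj').2).le)
        rw [Finset.sum_insert hknotin] at hmono
        have : -(Sp + Sn) + Sn ≤ (z (i+1)).arg + Sn := by linarith
        calc -(Real.pi - Real.pi / M) ≤ -Sp := by linarith
          _ = -(Sp + Sn) + Sn := by ring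
          _ ≤ (z (i+1)).arg + Sn := this
          _ ≤ _ := hmono
      · -- easy case: 0 ≤ arg z (i+1)
        have hsub : (Finset.Icc ((i+1) - (M-2)) (i+1)).filter (fun j => (z j).arg < 0)
            ⊆ (Finset.Icc (i - (M-2)) i).filter (fun j => (z j).arg < 0) := by
          intro j hj
          obtain ⟨hjI, hjneg⟩ := Finset.mem_filter.1 hj
          have hjI' := Finset.mem_Icc.1 hjI
          have hne : j ≠ i + 1 := by
            intro h; rw [h] at hjneg; exact absurd hposk (not_le.2 hjneg)
          exact Finset.mem_filter.2 ⟨Finset.mem_Icc.2 (by omega), hjneg⟩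
        have hmono := sum_mono_nonpos (f := fun j => (z j).arg) hsub (by
          intro j hj _
          exact ((Finset.mem_filter.1 hj).2).le)
        linarith
  -- conclusion
  have hkeyn := key n (by omega) le_rfl
  have hposn := hpos_bound n (by omega) le_rfl
  have hconv : Real.pi - Real.pi / M = Real.pi * ((M:ℝ) - 1) / M := by
    field_simp
  constructor
  · rw [_root_.abs_of_nonneg (Finset.sum_nonneg (fun j hj => (Finset.mem_filter.1 hj).2))]
    linarith
  · rw [_root_.abs_of_nonpos (Finset.sum_nonpos (fun j hj => ((Finset.mem_filter.1 hj).2).le))]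
    linarith
end

section
/- Let M ≥ 2 be an integer and let y_1, ..., y_{M−1} be nonzero complex numbers with −π + π/M ≤ arg y_i ≤ π/M for each i. For 1 ≤ k ≤ M−1, set T_+(k) := {1 ≤ i ≤ k : arg y_i ≥ 0} and T_−(k) := {1 ≤ i ≤ k : arg y_i < 0}, and suppose that for every k = 1, ..., M−1 one has |Σ_{i ∈ T_+(k)} arg y_i| ≤ π(M−1)/M and |Σ_{i ∈ T_−(k)} arg y_i| ≤ π(M−1)/M. Define u_1 := y_1 and u_{k+1} := y_{k+1}(u_k + 1) for k = 1, ..., M−2. Then for every k = 1, ..., M−1 (with the convention arg 0 := 0): if arg u_k ≥ 0, then arg u_k ≤ Σ_{i ∈ T_+(k)} arg y_i; if arg u_k < 0, then −arg u_k ≤ −Σ_{i ∈ T_−(k)} arg y_i; in particular |arg u_k| ≤ max( |Σ_{i ∈ T_+(k)} arg y_i|, |Σ_{i ∈ T_−(k)} arg y_i| ). -/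
lemma aux_core (r m a b : ℝ) (hm : m ≠ 0) (ha : 0 < a) (hb : 0 < b)
    (ha2 : a^2 = r^2 + m^2) (hb2 : b^2 = (r+1)^2 + m^2) : r * b ≤ (r+1) * a := by
  have hm2 : 0 < m^2 := by positivity
  rcases le_or_gt 0 r with hr | hr
  · have h1 : r * b * (r * b) ≤ ((r+1)*a) * ((r+1)*a) := by nlinarith
    have h2 : 0 ≤ (r+1) * a := by positivity
    nlinarith
  · rcases le_or_gt (r+1) 0 with hr1 | hr1
    · have h1 : ((r+1)*a) * ((r+1)*a) ≤ (r*b) * (r*b) := by nlinarith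
      have h2 : r * b < 0 := mul_neg_of_neg_of_pos hr hb
      nlinarith
    · nlinarith [mul_nonneg hr1.le ha.le, mul_pos hb (neg_pos.2 hr)]

lemma aux_cos_le (z : ℂ) (hz : z.im ≠ 0) : Real.cos z.arg ≤ Real.cos (z+1).arg := by
  have hz0 : z ≠ 0 := fun h => hz (by simp [h])
  have hz1 : z + 1 ≠ 0 := fun h => hz (by
    have : z.im = (z+1).im := by simp
    rw [this, h]; simp)
  rw [Complex.cos_arg hz0, Complex.cos_arg hz1]
  have ha : 0 < ‖z‖ := norm_pos_iff.mpr hz0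
  have hb : 0 < ‖z+1‖ := norm_pos_iff.mpr hz1
  rw [div_le_div_iff₀ ha hb]
  have ha2 : ‖z‖^2 = z.re^2 + z.im^2 := by
    rw [Complex.sq_norm, Complex.normSq_apply]; ring
  have hb2 : ‖z+1‖^2 = (z.re+1)^2 + z.im^2 := by
    rw [Complex.sq_norm, Complex.normSq_apply]; simp; ring
  have := aux_core z.re z.im ‖z‖ ‖z+1‖ hz ha hb ha2 hb2
  simpa using this

lemma aux_shrink (z : ℂ) (h : z.arg ≠ Real.pi) :
    z + 1 ≠ 0 ∧ (0 ≤ (z+1).arg ↔ 0 ≤ z.arg) ∧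
    (0 ≤ z.arg → (z+1).arg ≤ z.arg) ∧ (z.arg < 0 → z.arg ≤ (z+1).arg) := by
  rcases lt_trichotomy z.im 0 with him | him | him
  · -- im < 0 : both args in (-π, 0)
    have hzne : z.im ≠ 0 := ne_of_lt him
    have him1 : (z+1).im < 0 := by simpa using him
    have hz1 : z + 1 ≠ 0 := fun h => by rw [h] at him1; simp at him1
    have hA : z.arg < 0 := Complex.arg_neg_iff.2 him
    have hB : (z+1).arg < 0 := Complex.arg_neg_iff.2 him1
    refine ⟨hz1, by constructor <;> intro hh <;> linarith, fun hh => absurd hh (not_le.2 hA), fun _ => ?_⟩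
    -- use cos: |arg| comparison
    have hcos := aux_cos_le z hzne
    by_contra hc
    push_neg at hc
    have h1 : -(z+1).arg ∈ Set.Icc (0:ℝ) Real.pi :=
      ⟨by linarith, by linarith [Complex.neg_pi_lt_arg (z+1)]⟩
    have h2 : -z.arg ∈ Set.Icc (0:ℝ) Real.pi :=
      ⟨by linarith, by linarith [Complex.neg_pi_lt_arg z]⟩
    have := Real.strictAntiOn_cos h2 h1 (by linarith)
    rw [Real.cos_neg, Real.cos_neg] at this
    linarith
  · -- im = 0, arg ≠ π so arg = 0 and re ≥ 0
    have hA : z.arg = 0 ∨ z.arg = Real.pi := by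
      rcases lt_trichotomy z.re 0 with hr | hr | hr
      · exact Or.inr (Complex.arg_eq_pi_iff.2 ⟨hr, him⟩)
      · exact Or.inl (Complex.arg_eq_zero_iff.2 ⟨le_of_eq hr.symm, him⟩)
      · exact Or.inl (Complex.arg_eq_zero_iff.2 ⟨hr.le, him⟩)
    have hA0 : z.arg = 0 := hA.resolve_right h
    have hre : 0 ≤ z.re := (Complex.arg_eq_zero_iff.1 hA0).1
    have hB0 : (z+1).arg = 0 := Complex.arg_eq_zero_iff.2 ⟨by simp; linarith, by simp [him]⟩
    have hz1 : z + 1 ≠ 0 := fun h => by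
      have : (z+1).re = 0 := by rw [h]; simp
      simp at this; linarith
    refine ⟨hz1, by rw [hA0, hB0], fun _ => by rw [hA0, hB0], fun hh => by rw [hA0] at hh; linarith⟩
  · -- im > 0 : both args in (0, π)
    have hzne : z.im ≠ 0 := ne_of_gt him
    have him1 : 0 < (z+1).im := by simpa using him
    have hz1 : z + 1 ≠ 0 := fun h => by rw [h] at him1; simp at him1
    have hA : 0 < z.arg := by
      have h0 : 0 ≤ z.arg := Complex.arg_nonneg_iff.2 him.le
      rcases h0.lt_or_eq with h' | h'
      · exact h'
      · exact absurd (Complex.arg_eq_zero_iff.1 h'.symm).2 hzne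
    have hB : 0 < (z+1).arg := by
      have h0 : 0 ≤ (z+1).arg := Complex.arg_nonneg_iff.2 him1.le
      rcases h0.lt_or_eq with h' | h'
      · exact h'
      · exact absurd (Complex.arg_eq_zero_iff.1 h'.symm).2 (ne_of_gt him1)
    refine ⟨hz1, by constructor <;> intro hh <;> linarith, fun _ => ?_, fun hh => absurd hA (not_lt.2 hh.le)⟩
    have hcos := aux_cos_le z hzne
    by_contra hc
    push_neg at hc
    have h1 : z.arg ∈ Set.Icc (0:ℝ) Real.pi := ⟨hA.le, Complex.arg_le_pi z⟩
    have h2 : (z+1).arg ∈ Set.Icc (0:ℝ) Real.pi := ⟨hB.le, Complex.arg_le_pi _⟩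
    have := Real.strictAntiOn_cos h1 h2 hc
    linarith

lemma aux_sum_succ (f : ℕ → ℝ) (p : ℕ → Prop) [DecidablePred p] (k : ℕ) :
    ∑ i ∈ (Finset.Icc 1 (k+1)).filter p, f i
      = (∑ i ∈ (Finset.Icc 1 k).filter p, f i) + (if p (k+1) then f (k+1) else 0) := by
  rw [← Finset.insert_Icc_right_eq_Icc_add_one (by omega : 1 ≤ k + 1), Finset.filter_insert]
  have hnm : k + 1 ∉ (Finset.Icc 1 k).filter p := fun hmem =>
    absurd (Finset.mem_Icc.1 (Finset.mem_filter.1 hmem).1).2 (by omega)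
  split_ifs with hp
  · rw [Finset.sum_insert hnm]; ring
  · simp


/-- Lemma on the Horner-type recursion `u_1 = y_1`, `u_{k+1} = y_{k+1}(u_k + 1)`: the
argument of `u_k` is controlled by the sums of positive and negative arguments of the
`y_i`. (Here `arg 0 = 0`, as in Mathlib.) -/
theorem horner_recursion_arg_bound
    (M : ℕ) (hM : 2 ≤ M) (y : ℕ → ℂ)
    (hynz : ∀ i, 1 ≤ i → i ≤ M - 1 → y i ≠ 0)
    (hyarg : ∀ i, 1 ≤ i → i ≤ M - 1 →
      -Real.pi + Real.pi / M ≤ (y i).arg ∧ (y i).arg ≤ Real.pi / M)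
    (hsum : ∀ k, 1 ≤ k → k ≤ M - 1 →
      |∑ i ∈ (Finset.Icc 1 k).filter (fun i => 0 ≤ (y i).arg), (y i).arg| ≤
          Real.pi * (M - 1) / M ∧
      |∑ i ∈ (Finset.Icc 1 k).filter (fun i => (y i).arg < 0), (y i).arg| ≤
          Real.pi * (M - 1) / M)
    (u : ℕ → ℂ) (hu1 : u 1 = y 1)
    (hurec : ∀ k, 1 ≤ k → k ≤ M - 2 → u (k + 1) = y (k + 1) * (u k + 1)) :
    ∀ k, 1 ≤ k → k ≤ M - 1 →
      (0 ≤ (u k).arg →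
        (u k).arg ≤ ∑ i ∈ (Finset.Icc 1 k).filter (fun i => 0 ≤ (y i).arg), (y i).arg) ∧
      ((u k).arg < 0 →
        -(u k).arg ≤ -∑ i ∈ (Finset.Icc 1 k).filter (fun i => (y i).arg < 0), (y i).arg) ∧
      |(u k).arg| ≤
        max |∑ i ∈ (Finset.Icc 1 k).filter (fun i => 0 ≤ (y i).arg), (y i).arg|
          |∑ i ∈ (Finset.Icc 1 k).filter (fun i => (y i).arg < 0), (y i).arg| := by
  have hMR : (2:ℝ) ≤ (M:ℝ) := by exact_mod_cast hM
  have hMpos : (0:ℝ) < (M:ℝ) := by linarith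
  have hlt : Real.pi * ((M:ℝ) - 1) / M < Real.pi := by
    rw [div_lt_iff₀ hMpos]
    nlinarith [Real.pi_pos]
  intro k hk1
  induction k, hk1 using Nat.le_induction with
  | base =>
    intro hkM
    have h1arg : (u 1).arg = (y 1).arg := by rw [hu1]
    have h1 : Finset.Icc 1 1 = ({1} : Finset ℕ) := Finset.Icc_self 1
    rw [h1arg, h1]
    by_cases hp : 0 ≤ (y 1).arg
    · have hS : ∑ i ∈ ({1} : Finset ℕ).filter (fun i => 0 ≤ (y i).arg), (y i).arg
          = (y 1).arg := by
        rw [Finset.filter_singleton, if_pos hp, Finset.sum_singleton]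
      have hS' : ∑ i ∈ ({1} : Finset ℕ).filter (fun i => (y i).arg < 0), (y i).arg = 0 := by
        rw [Finset.filter_singleton, if_neg (not_lt.2 hp)]; simp
      rw [hS, hS']
      exact ⟨fun _ => le_refl _, fun hn => absurd hn (not_lt.2 hp), le_max_left _ _⟩
    · push_neg at hp
      have hS : ∑ i ∈ ({1} : Finset ℕ).filter (fun i => 0 ≤ (y i).arg), (y i).arg = 0 := by
        rw [Finset.filter_singleton, if_neg (not_le.2 hp)]; simp
      have hS' : ∑ i ∈ ({1} : Finset ℕ).filter (fun i => (y i).arg < 0), (y i).arg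
          = (y 1).arg := by
        rw [Finset.filter_singleton, if_pos hp, Finset.sum_singleton]
      rw [hS, hS']
      exact ⟨fun hp' => absurd hp' (not_le.2 hp), fun _ => le_refl _, le_max_right _ _⟩
  | succ k hk ih =>
    intro hkM
    have hkM' : k ≤ M - 1 := by omega
    have hk2 : k ≤ M - 2 := by omega
    obtain ⟨IH1, IH2, IH3⟩ := ih hkM'
    set P := ∑ i ∈ (Finset.Icc 1 k).filter (fun i => 0 ≤ (y i).arg), (y i).arg with hPdef
    set N := ∑ i ∈ (Finset.Icc 1 k).filter (fun i => (y i).arg < 0), (y i).arg with hNdef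
    have hPnn : 0 ≤ P := Finset.sum_nonneg fun i hi => (Finset.mem_filter.1 hi).2
    have hNnp : N ≤ 0 := Finset.sum_nonpos fun i hi => (Finset.mem_filter.1 hi).2.le
    obtain ⟨habs1, habs2⟩ := hsum k (by omega) hkM'
    obtain ⟨hT1, hT2⟩ := hsum (k+1) (by omega) hkM
    have hukπ : (u k).arg ≠ Real.pi := by
      have hlt' : |(u k).arg| < Real.pi :=
        lt_of_le_of_lt (IH3.trans (max_le habs1 habs2)) hlt
      intro hh
      rw [hh, abs_of_pos Real.pi_pos] at hlt'
      exact lt_irrefl _ hlt'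
    obtain ⟨hne, hiff, hposb, hnegb⟩ := aux_shrink (u k) hukπ
    set A := (y (k+1)).arg with hAdef
    set b := (u k + 1).arg with hbdef
    have hbP : b ≤ P := by
      rcases le_or_gt 0 (u k).arg with h0 | h0
      · exact (hposb h0).trans (IH1 h0)
      · have hb0 : b < 0 := lt_of_not_ge fun hb => absurd (hiff.1 hb) (not_le.2 h0)
        linarith
    have hNb : N ≤ b := by
      rcases le_or_gt 0 (u k).arg with h0 | h0
      · have : 0 ≤ b := hiff.2 h0
        linarith
      · have h2 := IH2 h0
        have := hnegb h0
        linarith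
    have hS1 : ∑ i ∈ (Finset.Icc 1 (k+1)).filter (fun i => 0 ≤ (y i).arg), (y i).arg
        = P + (if 0 ≤ A then A else 0) := aux_sum_succ _ _ k
    have hS2 : ∑ i ∈ (Finset.Icc 1 (k+1)).filter (fun i => (y i).arg < 0), (y i).arg
        = N + (if A < 0 then A else 0) := aux_sum_succ _ _ k
    rw [hS1] at hT1
    rw [hS2] at hT2
    set Q := if 0 ≤ A then A else 0 with hQdef
    set R := if A < 0 then A else 0 with hRdef
    have hAQ : A + b ≤ P + Q := by
      rw [hQdef]; split_ifs with hA
      · linarith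
      · push_neg at hA; linarith
    have hRA : N + R ≤ A + b := by
      rw [hRdef]; split_ifs with hA
      · linarith
      · push_neg at hA; linarith
    have hQnn : 0 ≤ Q := by rw [hQdef]; split_ifs with hA <;> [exact hA; exact le_refl 0]
    have hRnp : R ≤ 0 := by
      rw [hRdef]; split_ifs with hA <;> [exact hA.le; exact le_refl 0]
    have hPQnn : 0 ≤ P + Q := by linarith
    have hNRnp : N + R ≤ 0 := by linarith
    have hPQabs : |P + Q| = P + Q := abs_of_nonneg hPQnn
    have hNRabs : |N + R| = -(N + R) := abs_of_nonpos hNRnp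
    have huk1 : (u (k+1)).arg = A + b := by
      rw [hurec k (by omega) hk2]
      refine Complex.arg_mul (hynz (k+1) (by omega) hkM) hne ?_
      constructor
      · rw [hNRabs] at hT2; linarith
      · rw [hPQabs] at hT1; linarith
    rw [huk1, hS1, hS2]
    refine ⟨fun _ => hAQ, fun _ => by linarith, ?_⟩
    rw [abs_le]
    exact ⟨by linarith [le_max_right |P + Q| |N + R|],
      by linarith [le_max_left |P + Q| |N + R|]⟩
end

section
/- Let f(x) = a_0 x^5 + a_1 x^4 + a_2 x^3 + a_3 x^2 + a_4 x + a_5 be a real polynomial with a_0, a_1, a_2, a_5 > 0 and a_3/a_0 > a_4/a_1 > a_5/a_2. Then f does not vanish anywhere in the closed sector {z ∈ ℂ : |arg z| ≤ π/3}; in particular f has no zero z with |arg z| ≤ π/3 and none at z = 0. -/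
set_option maxHeartbeats 1000000

private lemma quintic_beta_pos (p q r s n m : ℝ)
    (hp : 0 < p) (hq : 0 < q) (hs : 0 < s) (h : p * s < q * r) :
    0 < p * q * (n ^ 2 + m ^ 2) + 2 * p * s * n + r * s := by
  nlinarith only [hp, hq, hs, h, mul_nonneg hp.le (sq_nonneg (q * n + s)),
    mul_nonneg (mul_nonneg hp.le (mul_self_nonneg q)) (sq_nonneg m),
    mul_pos hs (sub_pos.mpr h)]

private lemma quintic_final (S A C D V E F : ℝ)
    (hS3 : S ^ 2 = 3) (hS0 : 0 < S) (hV0 : 0 < V)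
    (q1 : 0 < S * A + D) (q2 : 0 < S * C + D) (q3 : 0 < S * E + F)
    (e1 : A + V + C = 0)
    (l1 : A * C + -D * D = V * E) (l2 : -D * C - A * D = V * F) : False := by
  have idV : S * (A * C - D ^ 2) + D * V = V * (S * E + F) := by
    linear_combination S * l1 + l2 + D * e1
  have hi : 0 < S * (A * C - D ^ 2) + D * V := by
    rw [idV]; exact mul_pos hV0 q3
  have e1' : S * A + S * C + S * V = 0 := by linear_combination S * e1
  have hDV : S * V < 2 * D := by linarith only [q1, q2, e1']
  have hexp : (S * A + D) * (S * C + D) = 3 * (A * C) - S * (D * V) + D ^ 2 := by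
    linear_combination (A * C) * hS3 + (S * D) * e1
  have hprod : 0 < 3 * (A * C) - S * (D * V) + D ^ 2 := by
    rw [← hexp]; exact mul_pos q1 q2
  have hexp2 : S * (S * (A * C - D ^ 2) + D * V) = 3 * (A * C - D ^ 2) + S * (D * V) := by
    linear_combination (A * C - D ^ 2) * hS3
  have hi2 : 0 < 3 * (A * C - D ^ 2) + S * (D * V) := by
    rw [← hexp2]; exact mul_pos hS0 hi
  have hACD : 0 < 6 * (A * C) - 2 * D ^ 2 := by linarith only [hprod, hi2]
  have hSV : 0 < S * V := mul_pos hS0 hV0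
  have hD0 : 0 < D := by linarith only [hDV, hSV]
  have hexp3 : (2 * D - S * V) * (2 * D + S * V) = 4 * D ^ 2 - 3 * V ^ 2 := by
    linear_combination (-(V ^ 2)) * hS3
  have hsq4 : 0 < 4 * D ^ 2 - 3 * V ^ 2 := by
    rw [← hexp3]
    exact mul_pos (by linarith only [hDV]) (by linarith only [hD0, hSV])
  have hsum : A ^ 2 + 2 * (A * C) + C ^ 2 = V ^ 2 := by
    linear_combination (A + C - V) * e1
  nlinarith only [hACD, sq_nonneg (A - C), hsum, hsq4]

private lemma quintic_boundary (a₀ a₁ a₂ a₃ a₄ a₅ x n : ℝ)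
    (h0 : 0 < a₀) (h1 : 0 < a₁) (h2 : 0 < a₂)
    (h13 : a₀ * a₄ < a₁ * a₃) (h24 : a₁ * a₅ < a₂ * a₄) (hx : 0 < x)
    (hI2 : 2 * x * (a₀ * n + a₃) + (a₁ * n + a₄) = 0)
    (hR2 : -(2 * x ^ 2) * (a₀ * n + a₃) + x * (a₁ * n + a₄) + (a₂ * n + a₅) = 0) :
    False := by
  rcases le_or_gt (a₀ * n + a₃) 0 with hK | hK
  · have t1 : 0 ≤ -(2 * x * (a₀ * n + a₃)) := by nlinarith only [hx, hK]
    have t2 : 0 ≤ a₁ * n + a₄ := by linarith only [hI2, t1]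
    have t3 : a₀ * (a₁ * n + a₄) < 0 := by
      linarith only [h13, mul_nonpos_of_nonneg_of_nonpos h1.le hK]
    linarith only [t3, mul_nonneg h0.le t2]
  · have hK5 : a₂ * n + a₅ = 4 * x ^ 2 * (a₀ * n + a₃) := by
      linear_combination hR2 - x * hI2
    have t4 : 0 < a₂ * n + a₅ := by
      nlinarith only [hK5, mul_pos (mul_pos hx hx) hK]
    have t5 : 0 < a₂ * (a₁ * n + a₄) := by
      linarith only [h24, mul_pos h1 t4]
    have t6 : a₁ * n + a₄ < 0 := by
      linarith only [hI2, mul_pos hx hK]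
    nlinarith only [t5, t6, h2]

open Complex in
private lemma quintic_key_aux
    (a₀ a₁ a₂ a₃ a₄ a₅ : ℝ)
    (h0 : 0 < a₀) (h1 : 0 < a₁) (h2 : 0 < a₂) (h5 : 0 < a₅)
    (h13 : a₀ * a₄ < a₁ * a₃) (h24 : a₁ * a₅ < a₂ * a₄)
    (x y : ℝ) (hx : 0 < x) (hy : 0 ≤ y) (hy3 : y ^ 2 ≤ 3 * x ^ 2) :
    (a₀ : ℂ) * ((x : ℂ) + (y : ℂ) * Complex.I) ^ 5
      + (a₁ : ℂ) * ((x : ℂ) + (y : ℂ) * Complex.I) ^ 4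
      + (a₂ : ℂ) * ((x : ℂ) + (y : ℂ) * Complex.I) ^ 3
      + (a₃ : ℂ) * ((x : ℂ) + (y : ℂ) * Complex.I) ^ 2
      + (a₄ : ℂ) * ((x : ℂ) + (y : ℂ) * Complex.I) + (a₅ : ℂ) ≠ 0 := by
  intro hf
  have h4 : 0 < a₄ := by nlinarith only [h24, h2, mul_pos h1 h5]
  have h3 : 0 < a₃ := by nlinarith only [h13, h1, mul_pos h0 h4]
  have h25 : a₀ * a₅ < a₂ * a₃ := by
    nlinarith only [h1, mul_pos h2 (sub_pos.mpr h13), mul_pos h0 (sub_pos.mpr h24)]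
  have hre := congrArg Complex.re hf
  have him := congrArg Complex.im hf
  simp only [pow_succ, pow_zero, one_mul, Complex.mul_re, Complex.mul_im,
    Complex.add_re, Complex.add_im, Complex.ofReal_re, Complex.ofReal_im,
    Complex.I_re, Complex.I_im, Complex.zero_re, Complex.zero_im, mul_zero, zero_mul,
    mul_one, sub_zero, zero_add, add_zero, zero_sub, neg_zero] at hre him
  rcases hy.eq_or_lt with hy0 | hy0
  · -- y = 0 : the polynomial is positive at a positive real
    subst hy0
    have e0 : a₀ * x ^ 5 + a₁ * x ^ 4 + a₂ * x ^ 3 + a₃ * x ^ 2 + a₄ * x + a₅ = 0 := by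
      linear_combination hre
    linarith only [e0, mul_pos h0 (pow_pos hx 5), mul_pos h1 (pow_pos hx 4),
      mul_pos h2 (pow_pos hx 3), mul_pos h3 (pow_pos hx 2), mul_pos h4 hx, h5]
  -- set up real coordinates of z^3 and the grouped terms
  obtain ⟨n, hn⟩ : ∃ t : ℝ, t = x ^ 3 - 3 * x * y ^ 2 := ⟨_, rfl⟩
  obtain ⟨m, hm⟩ : ∃ t : ℝ, t = 3 * x ^ 2 * y - y ^ 3 := ⟨_, rfl⟩
  obtain ⟨N, hN⟩ : ∃ t : ℝ, t = x ^ 2 + y ^ 2 := ⟨_, rfl⟩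
  obtain ⟨Ru, hRu⟩ : ∃ t : ℝ, t = (x^2 - y^2) * (a₀*n + a₃) - 2*x*y*(a₀*m) := ⟨_, rfl⟩
  obtain ⟨Iu, hIu⟩ : ∃ t : ℝ, t = (x^2 - y^2) * (a₀*m) + 2*x*y*(a₀*n + a₃) := ⟨_, rfl⟩
  obtain ⟨Rv, hRv⟩ : ∃ t : ℝ, t = x * (a₁*n + a₄) - y * (a₁*m) := ⟨_, rfl⟩
  obtain ⟨Iv, hIv⟩ : ∃ t : ℝ, t = x * (a₁*m) + y * (a₁*n + a₄) := ⟨_, rfl⟩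
  obtain ⟨Rs, hRs⟩ : ∃ t : ℝ, t = a₂*n + a₅ := ⟨_, rfl⟩
  obtain ⟨Is, hIs⟩ : ∃ t : ℝ, t = a₂*m := ⟨_, rfl⟩
  have eR : Ru + Rv + Rs = 0 := by
    simp only [hRu, hRv, hRs, hn, hm]; linear_combination hre
  have eI : Iu + Iv + Is = 0 := by
    simp only [hIu, hIv, hIs, hn, hm]; linear_combination him
  clear hre him hf
  rcases eq_or_lt_of_le hy3 with heq | hlt
  · -- boundary case  y² = 3x²  (arg z = π/3)
    have heq' : y ^ 2 = 3 * x ^ 2 := heq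
    have hm0 : m = 0 := by rw [hm]; linear_combination (-y) * heq'
    simp only [hRu, hRv, hRs, hIu, hIv, hIs, hm0, mul_zero, zero_mul, add_zero,
      zero_add, sub_zero] at eR eI
    have hy' : y ≠ 0 := ne_of_gt hy0
    have hI2 : 2*x*(a₀*n + a₃) + (a₁*n + a₄) = 0 := by
      apply mul_left_cancel₀ hy'
      rw [mul_zero]; linear_combination eI
    have hR2 : -(2*x^2) * (a₀*n + a₃) + x*(a₁*n + a₄) + (a₂*n + a₅) = 0 := by
      linear_combination eR + (a₀*n + a₃) * heq'
    exact quintic_boundary a₀ a₁ a₂ a₃ a₄ a₅ x n h0 h1 h2 h13 h24 hx hI2 hR2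
  · -- main case  y² < 3x²
    obtain ⟨S, hS3, hS0⟩ : ∃ S : ℝ, S ^ 2 = 3 ∧ 0 < S :=
      ⟨Real.sqrt 3, Real.sq_sqrt (by norm_num), Real.sqrt_pos.mpr (by norm_num)⟩
    have hm0 : 0 < m := by
      rw [hm]; nlinarith only [mul_pos hy0 (sub_pos.mpr hlt)]
    have hN0 : 0 < N := by rw [hN]; positivity
    have hS3x : S^2 * x^2 = 3 * x^2 := by linear_combination x^2 * hS3
    have hSxy : 0 < S*x + y := by
      have := mul_pos hS0 hx; linarith only [this, hy]
    have hP : 0 < S*x - y := by nlinarith only [hlt, hSxy, hS3x]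
    have hQ : 0 < S*(x^2 - y^2) + 2*x*y := by
      have hQid : S*(x^2 - y^2) + 2*x*y = (S*x - y) * (x + S*y) := by
        linear_combination (-(x*y)) * hS3
      rw [hQid]
      have : 0 < x + S*y := by
        have := mul_nonneg hS0.le hy; linarith only [this, hx]
      exact mul_pos hP this
    have hβ₁ : 0 < a₀*a₁*(n^2 + m^2) + 2*a₀*a₄*n + a₃*a₄ :=
      quintic_beta_pos a₀ a₁ a₃ a₄ n m h0 h1 h4 h13
    have hβ₂ : 0 < a₁*a₂*(n^2 + m^2) + 2*a₁*a₅*n + a₄*a₅ :=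
      quintic_beta_pos a₁ a₂ a₄ a₅ n m h1 h2 h5 h24
    have hβ₃ : 0 < a₀*a₂*(n^2 + m^2) + 2*a₀*a₅*n + a₃*a₅ :=
      quintic_beta_pos a₀ a₂ a₃ a₅ n m h0 h2 h5 h25
    have hα₁ : 0 < a₁*a₃ - a₀*a₄ := by linarith only [h13]
    have hα₂ : 0 < a₂*a₄ - a₁*a₅ := by linarith only [h24]
    have hα₃ : 0 < a₂*a₃ - a₀*a₅ := by linarith only [h25]
    obtain ⟨A, hA⟩ : ∃ t : ℝ, t = Ru*Rv + Iu*Iv := ⟨_, rfl⟩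
    obtain ⟨B, hB⟩ : ∃ t : ℝ, t = Iu*Rv - Ru*Iv := ⟨_, rfl⟩
    obtain ⟨C, hC⟩ : ∃ t : ℝ, t = Rs*Rv + Is*Iv := ⟨_, rfl⟩
    obtain ⟨D, hD⟩ : ∃ t : ℝ, t = Is*Rv - Rs*Iv := ⟨_, rfl⟩
    obtain ⟨E, hE⟩ : ∃ t : ℝ, t = Ru*Rs + Iu*Is := ⟨_, rfl⟩
    obtain ⟨F, hF⟩ : ∃ t : ℝ, t = Iu*Rs - Ru*Is := ⟨_, rfl⟩
    obtain ⟨V, hV⟩ : ∃ t : ℝ, t = Rv^2 + Iv^2 := ⟨_, rfl⟩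
    have hV0 : 0 < V := by
      have hVid : V = N * ((a₁*n + a₄)^2 + (a₁*m)^2) := by
        simp only [hV, hRv, hIv, hN]; ring
      rw [hVid]
      exact mul_pos hN0 (add_pos_of_nonneg_of_pos (sq_nonneg _)
        (pow_pos (mul_pos h1 hm0) 2))
    have q1 : 0 < S*A - B := by
      have id1 : S*A - B = ((a₁*a₃ - a₀*a₄) * N^2) * (S*(x^2 - y^2) + 2*x*y)
          + ((a₀*a₁*(n^2 + m^2) + 2*a₀*a₄*n + a₃*a₄) * N) * (S*x - y) := by
        simp only [hA, hB, hRu, hIu, hRv, hIv, hN, hn, hm]; ring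
      rw [id1]
      exact add_pos (mul_pos (mul_pos hα₁ (pow_pos hN0 2)) hQ)
        (mul_pos (mul_pos hβ₁ hN0) hP)
    have q2 : 0 < S*C + D := by
      have id2 : S*C + D = ((a₂*a₄ - a₁*a₅) * N) * (S*(x^2 - y^2) + 2*x*y)
          + (a₁*a₂*(n^2 + m^2) + 2*a₁*a₅*n + a₄*a₅) * (S*x - y) := by
        simp only [hC, hD, hRs, hIs, hRv, hIv, hN, hn, hm]; ring
      rw [id2]
      exact add_pos (mul_pos (mul_pos hα₂ hN0) hQ) (mul_pos hβ₂ hP)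
    have q3 : 0 < S*E + F := by
      have id3 : S*E + F = ((a₂*a₃ - a₀*a₅) * N^2) * (S*x - y)
          + (a₀*a₂*(n^2 + m^2) + 2*a₀*a₅*n + a₃*a₅) * (S*(x^2 - y^2) + 2*x*y) := by
        simp only [hE, hF, hRu, hIu, hRs, hIs, hN, hn, hm]; ring
      rw [id3]
      exact add_pos (mul_pos (mul_pos hα₃ (pow_pos hN0 2)) hP) (mul_pos hβ₃ hQ)
    have e1 : A + V + C = 0 := by
      simp only [hA, hV, hC]; linear_combination Rv * eR + Iv * eI
    have e2 : B + D = 0 := by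
      simp only [hB, hD]; linear_combination Rv * eI - Iv * eR
    have l1 : A*C + B*D = V*E := by
      simp only [hA, hB, hC, hD, hE, hV]; ring
    have l2 : B*C - A*D = V*F := by
      simp only [hA, hB, hC, hD, hF, hV]; ring
    have hB' : B = -D := by linarith only [e2]
    rw [hB'] at l1 l2 q1
    have q1' : 0 < S*A + D := by linarith only [q1]
    exact quintic_final S A C D V E F hS3 hS0 hV0 q1' q2 q3 e1 l1 l2

/-- For a real quintic `f(x) = a₀x⁵ + a₁x⁴ + a₂x³ + a₃x² + a₄x + a₅` with
`a₀, a₁, a₂, a₅ > 0` and `a₃/a₀ > a₄/a₁ > a₅/a₂`, the polynomial `f` does not vanish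
anywhere in the closed sector `|arg z| ≤ π/3` (which contains the origin, since
`arg 0 = 0`). -/
theorem quintic_no_zeros_in_sector
    (a₀ a₁ a₂ a₃ a₄ a₅ : ℝ)
    (h0 : 0 < a₀) (h1 : 0 < a₁) (h2 : 0 < a₂) (h5 : 0 < a₅)
    (h34 : a₄ / a₁ < a₃ / a₀) (h45 : a₅ / a₂ < a₄ / a₁) :
    ∀ z : ℂ, |z.arg| ≤ Real.pi / 3 →
      (a₀ : ℂ) * z ^ 5 + (a₁ : ℂ) * z ^ 4 + (a₂ : ℂ) * z ^ 3 + (a₃ : ℂ) * z ^ 2 +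
          (a₄ : ℂ) * z + (a₅ : ℂ) ≠ 0 := by
  have h13 : a₀ * a₄ < a₁ * a₃ := by
    have := (div_lt_div_iff₀ h1 h0).mp h34
    linarith
  have h24 : a₁ * a₅ < a₂ * a₄ := by
    have := (div_lt_div_iff₀ h2 h1).mp h45
    linarith
  intro z hz
  by_cases hz0 : z = 0
  · subst hz0
    simp only [ne_eq, zero_pow, mul_zero, zero_add, add_zero, pow_succ, mul_zero]
    simp
    exact ne_of_gt h5
  -- coordinates
  have habs : 0 < ‖z‖ := norm_pos_iff.mpr hz0
  have hcos : Real.cos (Real.pi / 3) ≤ Real.cos |z.arg| := by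
    apply Real.cos_le_cos_of_nonneg_of_le_pi (abs_nonneg _)
      (by linarith [Real.pi_pos]) hz
  rw [Real.cos_abs, Complex.cos_arg hz0, Real.cos_pi_div_three] at hcos
  have h2x : ‖z‖ ≤ 2 * z.re := by
    have := (le_div_iff₀ habs).mp hcos
    linarith
  have hx : 0 < z.re := by linarith
  have hsq : z.im ^ 2 ≤ 3 * z.re ^ 2 := by
    have habs2 : ‖z‖ ^ 2 = z.re ^ 2 + z.im ^ 2 := by
      rw [Complex.sq_norm, Complex.normSq_apply]; ring
    nlinarith [habs, h2x, habs2]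
  rcases le_or_gt 0 z.im with hy | hy
  · have key := quintic_key_aux a₀ a₁ a₂ a₃ a₄ a₅ h0 h1 h2 h5 h13 h24
      z.re z.im hx hy hsq
    rwa [Complex.re_add_im] at key
  · have key := quintic_key_aux a₀ a₁ a₂ a₃ a₄ a₅ h0 h1 h2 h5 h13 h24
      z.re (-z.im) hx (by linarith) (by nlinarith [hsq])
    intro hf
    apply key
    have hconj : ((z.re : ℂ) + ((-z.im : ℝ) : ℂ) * Complex.I) = (starRingEnd ℂ) z := by
      apply Complex.ext <;> simp
    rw [hconj]
    have h2' := congrArg (starRingEnd ℂ) hf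
    rw [map_zero] at h2'
    rw [← h2']
    simp only [map_add, map_mul, map_pow, Complex.conj_ofReal]
end
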